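/- arXiv:1806.03728 — 2 statements merged into one kernel-verified Lean document; each statement's English description precedes it below -/
import Mathlib

section
/- Let $n\ge 2$, $1<p\le q<\infty$, $p'=p/(p-1)$, and $\alpha,\beta\in\mathbb{R}$ with $\alpha+n<0$. Then $\sup_{t>0}\left(\int_t^\infty (\sinh\rho)^{\alpha+n-1}d\rho\right)^{1/q}\left(\int_0^t (\sinh\rho)^{\beta(1-p')+n-1}d\rho\right)^{1/p'}<\infty$ if and only if $\beta(1-p')+n>0$ and $0\le \frac{\alpha+n}{q}+\frac{\beta(1-p')+n}{p'}\le \frac{1}{q}+\frac{1}{p'}$. -/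
open MeasureTheory Set intervalIntegral
open scoped ENNReal Interval

namespace MHB


lemma sinh_le_8mul {x : ℝ} (h0 : 0 ≤ x) (h1 : x ≤ 1) : Real.sinh x ≤ 8 * x := by
  have h2 : Real.exp x - Real.exp (-x) = Real.exp (-x) * (Real.exp (2*x) - 1) := by
    rw [mul_sub, ← Real.exp_add]; ring_nf
  have h3 : Real.exp (-x) ≤ 1 := Real.exp_le_one_iff.2 (by linarith)
  have h4 : (0:ℝ) ≤ Real.exp (2*x) - 1 := by
    have := Real.one_le_exp (by linarith : (0:ℝ) ≤ 2*x); linarith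
  have h5 : Real.exp (2*x) - 1 ≤ 2*x * Real.exp (2*x) := by
    have h := Real.add_one_le_exp (-(2*x))
    rw [Real.exp_neg] at h
    have hp := Real.exp_pos (2*x)
    have h' := mul_le_mul_of_nonneg_right h hp.le
    rw [inv_mul_cancel₀ (ne_of_gt hp)] at h'
    nlinarith
  have h6 : Real.exp (2*x) ≤ 8 := by
    have h7 : Real.exp (2*x) ≤ Real.exp 2 := Real.exp_le_exp.2 (by linarith)
    have h8 : Real.exp 2 = Real.exp 1 * Real.exp 1 := by rw [← Real.exp_add]; norm_num
    have h9 := Real.exp_one_lt_d9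
    have h10 : (0:ℝ) < Real.exp 1 := Real.exp_pos 1
    nlinarith
  rw [Real.sinh_eq, h2]
  have h11 : Real.exp (-x) * (Real.exp (2*x) - 1) ≤ Real.exp (2*x) - 1 := by
    nlinarith
  have h12 : Real.exp (2*x) - 1 ≤ 16 * x := by nlinarith
  linarith

lemma exp_le_3sinh {x : ℝ} (h : 1 ≤ x) : Real.exp x ≤ 3 * Real.sinh x := by
  rw [Real.sinh_eq]
  have h1 : Real.exp (-x) * Real.exp x = 1 := by rw [← Real.exp_add]; simp
  have h2 : Real.exp 1 * Real.exp 1 ≤ Real.exp x * Real.exp x := by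
    have := Real.exp_le_exp.2 h
    nlinarith [Real.exp_pos (1:ℝ), Real.exp_pos x]
  have h3 : (2:ℝ) ≤ Real.exp 1 := by
    have := Real.add_one_le_exp (1:ℝ); linarith
  have hx := Real.exp_pos x
  have hmx := Real.exp_pos (-x)
  -- 3 * e^{-x} ≤ e^x since e^{-x} e^x = 1 and e^x e^x ≥ 4
  have h4 : 3 * Real.exp (-x) ≤ Real.exp x := by nlinarith
  linarith

lemma sinh_le_exp {x : ℝ} : Real.sinh x ≤ Real.exp x := by
  rw [Real.sinh_eq]
  have := Real.exp_pos (-x)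
  have := Real.exp_pos x
  linarith



lemma lint_eq {f : ℝ → ℝ} {s : Set ℝ} (hs : MeasurableSet s) (hint : IntegrableOn f s)
    (hnn : ∀ x ∈ s, 0 ≤ f x) :
    ∫⁻ x in s, ENNReal.ofReal (f x) = ENNReal.ofReal (∫ x in s, f x) :=
  (ofReal_integral_eq_lintegral_ofReal hint ((ae_restrict_iff' hs).2 (ae_of_all _ hnn))).symm

lemma J1 {c : ℝ} (hc : -1 < c) {t : ℝ} (ht : 0 < t) :
    ∫⁻ x in Ioc 0 t, ENNReal.ofReal (x ^ c) = ENNReal.ofReal (t ^ (c+1) / (c+1)) := by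
  have hint : IntegrableOn (fun x : ℝ => x ^ c) (Ioc 0 t) :=
    (intervalIntegrable_iff_integrableOn_Ioc_of_le ht.le).1 (intervalIntegrable_rpow' hc)
  rw [lint_eq measurableSet_Ioc hint (fun x hx => Real.rpow_nonneg hx.1.le c)]
  rw [← intervalIntegral.integral_of_le ht.le, integral_rpow (Or.inl hc)]
  rw [Real.zero_rpow (by linarith : c + 1 ≠ 0)]
  ring_nf

lemma J2 {c : ℝ} (hc : c ≠ -1) {u v : ℝ} (hu : 0 < u) (huv : u ≤ v) :
    ∫⁻ x in Ioc u v, ENNReal.ofReal (x ^ c) =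
      ENNReal.ofReal ((v ^ (c+1) - u ^ (c+1)) / (c+1)) := by
  have hmem : (0:ℝ) ∉ [[u, v]] := by
    rw [Set.uIcc_of_le huv]; intro h; exact absurd h.1 (not_le.2 hu)
  have hint : IntegrableOn (fun x : ℝ => x ^ c) (Ioc u v) :=
    (intervalIntegrable_iff_integrableOn_Ioc_of_le huv).1 (intervalIntegrable_rpow (Or.inr hmem))
  rw [lint_eq measurableSet_Ioc hint (fun x hx => Real.rpow_nonneg (hu.trans hx.1).le c)]
  rw [← intervalIntegral.integral_of_le huv, integral_rpow (Or.inr ⟨hc, hmem⟩)]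

lemma integral_exp_mul (c : ℝ) (hc : c ≠ 0) (u v : ℝ) :
    ∫ x in u..v, Real.exp (c*x) = (Real.exp (c*v) - Real.exp (c*u)) / c := by
  have hderiv : ∀ x ∈ [[u, v]], HasDerivAt (fun y => Real.exp (c*y) / c) (Real.exp (c*x)) x := by
    intro x _
    have h1 : HasDerivAt (fun y : ℝ => c * y) c x := by
      simpa using (hasDerivAt_id x).const_mul c
    have h2 := h1.exp
    have h3 := h2.div_const c
    simpa [mul_div_assoc, mul_div_cancel_left₀ _ hc, mul_comm] using h3
  have hint : IntervalIntegrable (fun x => Real.exp (c*x)) volume u v :=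
    (Real.continuous_exp.comp (continuous_const.mul continuous_id)).intervalIntegrable u v
  rw [intervalIntegral.integral_eq_sub_of_hasDerivAt hderiv hint]
  ring

lemma J3 {c : ℝ} (hc : c ≠ 0) {u v : ℝ} (huv : u ≤ v) :
    ∫⁻ x in Ioc u v, ENNReal.ofReal (Real.exp (c*x)) =
      ENNReal.ofReal ((Real.exp (c*v) - Real.exp (c*u)) / c) := by
  have hint : IntegrableOn (fun x : ℝ => Real.exp (c*x)) (Ioc u v) :=
    (intervalIntegrable_iff_integrableOn_Ioc_of_le huv).1
      ((Real.continuous_exp.comp (continuous_const.mul continuous_id)).intervalIntegrable u v)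
  rw [lint_eq measurableSet_Ioc hint (fun x _ => (Real.exp_pos _).le)]
  rw [← intervalIntegral.integral_of_le huv, integral_exp_mul c hc u v]

lemma integrableOn_exp_mul_Ioi {c : ℝ} (hc : c < 0) (t : ℝ) :
    IntegrableOn (fun x : ℝ => Real.exp (c*x)) (Ioi t) := by
  have := exp_neg_integrableOn_Ioi t (show (0:ℝ) < -c by linarith)
  simpa using this

lemma integral_exp_mul_Ioi {c : ℝ} (hc : c < 0) (t : ℝ) :
    ∫ x in Ioi t, Real.exp (c*x) = Real.exp (c*t) / (-c) := by
  have hderiv : ∀ x ∈ Ici t, HasDerivAt (fun y => Real.exp (c*y) / c) (Real.exp (c*x)) x := by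
    intro x _
    have h1 : HasDerivAt (fun y : ℝ => c * y) c x := by
      simpa using (hasDerivAt_id x).const_mul c
    have h3 := h1.exp.div_const c
    simpa [mul_div_assoc, mul_div_cancel_left₀ _ (ne_of_lt hc), mul_comm] using h3
  have htend : Filter.Tendsto (fun y => Real.exp (c*y) / c) Filter.atTop (nhds 0) := by
    have h1 : Filter.Tendsto (fun y : ℝ => c * y) Filter.atTop Filter.atBot :=
      Filter.tendsto_id.const_mul_atTop_of_neg hc
    have h2 := Real.tendsto_exp_atBot.comp h1
    have h3 := h2.div_const c
    simpa using h3
  have := integral_Ioi_of_hasDerivAt_of_tendsto' hderiv (integrableOn_exp_mul_Ioi hc t) htend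
  rw [this, zero_sub, div_neg]

lemma J4 {c : ℝ} (hc : c < 0) (t : ℝ) :
    ∫⁻ x in Ioi t, ENNReal.ofReal (Real.exp (c*x)) =
      ENNReal.ofReal (Real.exp (c*t) / (-c)) := by
  rw [lint_eq measurableSet_Ioi (integrableOn_exp_mul_Ioi hc t) (fun x _ => (Real.exp_pos _).le)]
  rw [integral_exp_mul_Ioi hc t]

lemma Jdiv {c : ℝ} (hc : c ≤ -1) {t : ℝ} (ht : 0 < t) :
    ∫⁻ x in Ioc 0 t, ENNReal.ofReal (x ^ c) = ⊤ := by
  by_contra h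
  have hlt : (∫⁻ x in Ioc 0 t, ENNReal.ofReal (x ^ c)) < ⊤ := lt_top_iff_ne_top.2 h
  have hmeas : Measurable fun x : ℝ => x ^ c := measurable_id.pow measurable_const
  have hnn : 0 ≤ᵐ[volume.restrict (Ioc 0 t)] fun x : ℝ => x ^ c :=
    (ae_restrict_iff' measurableSet_Ioc).2 (ae_of_all _ fun x hx => Real.rpow_nonneg hx.1.le c)
  have hint : IntegrableOn (fun x : ℝ => x ^ c) (Ioc 0 t) := by
    refine ⟨hmeas.aestronglyMeasurable, ?_⟩
    rw [hasFiniteIntegral_iff_ofReal hnn]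
    exact hlt
  have hint' : IntegrableOn (fun x : ℝ => x ^ c) (Ioo 0 t) := hint.mono_set Ioo_subset_Ioc_self
  rw [intervalIntegral.integrableOn_Ioo_rpow_iff ht] at hint'
  linarith



noncomputable def K1 (c : ℝ) : ℝ := min 1 ((8:ℝ) ^ c)
noncomputable def K2 (c : ℝ) : ℝ := max 1 ((8:ℝ) ^ c)
noncomputable def K3 (c : ℝ) : ℝ := min 1 ((3:ℝ) ^ (-c))
noncomputable def K4 (c : ℝ) : ℝ := max 1 ((3:ℝ) ^ (-c))

lemma K1_pos (c : ℝ) : 0 < K1 c := lt_min one_pos (Real.rpow_pos_of_pos (by norm_num) c)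
lemma K2_pos (c : ℝ) : 0 < K2 c := lt_of_lt_of_le one_pos (le_max_left _ _)
lemma K3_pos (c : ℝ) : 0 < K3 c := lt_min one_pos (Real.rpow_pos_of_pos (by norm_num) (-c))
lemma K4_pos (c : ℝ) : 0 < K4 c := lt_of_lt_of_le one_pos (le_max_left _ _)

lemma P1 (c : ℝ) {ρ : ℝ} (h0 : 0 < ρ) (h1 : ρ ≤ 1) :
    K1 c * ρ ^ c ≤ Real.sinh ρ ^ c ∧ Real.sinh ρ ^ c ≤ K2 c * ρ ^ c := by
  have hs0 : 0 < Real.sinh ρ := Real.sinh_pos_iff.2 h0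
  have hlow : ρ ≤ Real.sinh ρ := (Real.self_lt_sinh_iff.2 h0).le
  have hhigh : Real.sinh ρ ≤ 8 * ρ := sinh_le_8mul h0.le h1
  have hrnn : (0:ℝ) ≤ ρ ^ c := Real.rpow_nonneg h0.le c
  have h8 : ((8:ℝ) * ρ) ^ c = (8:ℝ)^c * ρ ^ c := Real.mul_rpow (by norm_num) h0.le
  rcases le_or_gt 0 c with hcn | hcn
  · constructor
    · calc K1 c * ρ ^ c ≤ 1 * ρ ^ c := by
            exact mul_le_mul_of_nonneg_right (min_le_left _ _) hrnn
        _ = ρ ^ c := one_mul _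
        _ ≤ Real.sinh ρ ^ c := Real.rpow_le_rpow h0.le hlow hcn
    · calc Real.sinh ρ ^ c ≤ ((8:ℝ) * ρ) ^ c := Real.rpow_le_rpow hs0.le hhigh hcn
        _ = (8:ℝ)^c * ρ ^ c := h8
        _ ≤ K2 c * ρ ^ c := mul_le_mul_of_nonneg_right (le_max_right _ _) hrnn
  · constructor
    · calc K1 c * ρ ^ c ≤ (8:ℝ)^c * ρ ^ c :=
            mul_le_mul_of_nonneg_right (min_le_right _ _) hrnn
        _ = ((8:ℝ) * ρ) ^ c := h8.symm
        _ ≤ Real.sinh ρ ^ c := Real.rpow_le_rpow_of_nonpos hs0 hhigh hcn.le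
    · calc Real.sinh ρ ^ c ≤ ρ ^ c := Real.rpow_le_rpow_of_nonpos h0 hlow hcn.le
        _ = 1 * ρ ^ c := (one_mul _).symm
        _ ≤ K2 c * ρ ^ c := mul_le_mul_of_nonneg_right (le_max_left _ _) hrnn

lemma exp_rpow' (ρ c : ℝ) : Real.exp ρ ^ c = Real.exp (c * ρ) := by
  rw [Real.rpow_def_of_pos (Real.exp_pos ρ), Real.log_exp, mul_comm]

lemma exp_div3_rpow (ρ c : ℝ) : (Real.exp ρ / 3) ^ c = (3:ℝ)^(-c) * Real.exp (c * ρ) := by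
  rw [Real.div_rpow (Real.exp_pos ρ).le (by norm_num), exp_rpow', Real.rpow_neg (by norm_num)]
  ring

lemma P2 (c : ℝ) {ρ : ℝ} (h1 : 1 ≤ ρ) :
    K3 c * Real.exp (c * ρ) ≤ Real.sinh ρ ^ c ∧
      Real.sinh ρ ^ c ≤ K4 c * Real.exp (c * ρ) := by
  have h0 : (0:ℝ) < ρ := lt_of_lt_of_le one_pos h1
  have hs0 : 0 < Real.sinh ρ := Real.sinh_pos_iff.2 h0
  have hlow : Real.exp ρ / 3 ≤ Real.sinh ρ := by
    have := exp_le_3sinh h1; linarith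
  have hhigh : Real.sinh ρ ≤ Real.exp ρ := sinh_le_exp
  have hed : (0:ℝ) < Real.exp ρ / 3 := by positivity
  have henn : (0:ℝ) ≤ Real.exp (c * ρ) := (Real.exp_pos _).le
  rcases le_or_gt 0 c with hcn | hcn
  · constructor
    · calc K3 c * Real.exp (c*ρ) ≤ (3:ℝ)^(-c) * Real.exp (c*ρ) :=
            mul_le_mul_of_nonneg_right (min_le_right _ _) henn
        _ = (Real.exp ρ / 3) ^ c := (exp_div3_rpow ρ c).symm
        _ ≤ Real.sinh ρ ^ c := Real.rpow_le_rpow hed.le hlow hcn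
    · calc Real.sinh ρ ^ c ≤ (Real.exp ρ) ^ c := Real.rpow_le_rpow hs0.le hhigh hcn
        _ = Real.exp (c*ρ) := exp_rpow' ρ c
        _ = 1 * Real.exp (c*ρ) := (one_mul _).symm
        _ ≤ K4 c * Real.exp (c*ρ) := mul_le_mul_of_nonneg_right (le_max_left _ _) henn
  · constructor
    · calc K3 c * Real.exp (c*ρ) ≤ 1 * Real.exp (c*ρ) :=
            mul_le_mul_of_nonneg_right (min_le_left _ _) henn
        _ = (Real.exp ρ) ^ c := by rw [one_mul, exp_rpow']
        _ ≤ Real.sinh ρ ^ c := Real.rpow_le_rpow_of_nonpos hs0 hhigh hcn.le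
    · calc Real.sinh ρ ^ c ≤ (Real.exp ρ / 3) ^ c :=
            Real.rpow_le_rpow_of_nonpos hed hlow hcn.le
        _ = (3:ℝ)^(-c) * Real.exp (c*ρ) := exp_div3_rpow ρ c
        _ ≤ K4 c * Real.exp (c*ρ) := mul_le_mul_of_nonneg_right (le_max_right _ _) henn

lemma measSinh (c : ℝ) : Measurable fun ρ : ℝ => ENNReal.ofReal (Real.sinh ρ ^ c) :=
  (Real.measurable_sinh.pow measurable_const).ennreal_ofReal

lemma measRpow (c : ℝ) : Measurable fun x : ℝ => ENNReal.ofReal (x ^ c) :=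
  (measurable_id.pow measurable_const).ennreal_ofReal

lemma measExpMul (c : ℝ) : Measurable fun x : ℝ => ENNReal.ofReal (Real.exp (c * x)) :=
  (Real.measurable_exp.comp (measurable_const.mul measurable_id)).ennreal_ofReal

lemma lint_scale {K : ℝ} (hK : 0 ≤ K) {g : ℝ → ℝ} (hg : Measurable fun x => ENNReal.ofReal (g x))
    (s : Set ℝ) :
    ∫⁻ x in s, ENNReal.ofReal (K * g x) = ENNReal.ofReal K * ∫⁻ x in s, ENNReal.ofReal (g x) := by
  simp_rw [ENNReal.ofReal_mul hK]
  exact lintegral_const_mul _ hg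




-- chunk 4: region bounds A1 A2 B1 B2 C1 C2 C0
lemma A1 {c : ℝ} (hc : c ≠ -1) {u v : ℝ} (hu : 0 < u) (huv : u ≤ v) (hv : v ≤ 1) :
    ∫⁻ ρ in Ioc u v, ENNReal.ofReal (Real.sinh ρ ^ c)
      ≤ ENNReal.ofReal (K2 c * ((v^(c+1) - u^(c+1))/(c+1))) := by
  calc ∫⁻ ρ in Ioc u v, ENNReal.ofReal (Real.sinh ρ ^ c)
      ≤ ∫⁻ ρ in Ioc u v, ENNReal.ofReal (K2 c * ρ ^ c) :=
        setLIntegral_mono' measurableSet_Ioc (fun x hx => ENNReal.ofReal_le_ofReal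
          (P1 c (hu.trans hx.1) (hx.2.trans hv)).2)
    _ = ENNReal.ofReal (K2 c) * ∫⁻ ρ in Ioc u v, ENNReal.ofReal (ρ ^ c) :=
        lint_scale (K2_pos _).le (measRpow _) _
    _ = ENNReal.ofReal (K2 c) * ENNReal.ofReal ((v^(c+1) - u^(c+1))/(c+1)) := by
        rw [J2 hc hu huv]
    _ = ENNReal.ofReal (K2 c * ((v^(c+1) - u^(c+1))/(c+1))) :=
        (ENNReal.ofReal_mul (K2_pos _).le).symm

lemma A2 {c : ℝ} (hc : c ≠ -1) {u v : ℝ} (hu : 0 < u) (huv : u ≤ v) (hv : v ≤ 1) :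
    ENNReal.ofReal (K1 c * ((v^(c+1) - u^(c+1))/(c+1)))
      ≤ ∫⁻ ρ in Ioc u v, ENNReal.ofReal (Real.sinh ρ ^ c) := by
  calc ENNReal.ofReal (K1 c * ((v^(c+1) - u^(c+1))/(c+1)))
      = ENNReal.ofReal (K1 c) * ENNReal.ofReal ((v^(c+1) - u^(c+1))/(c+1)) :=
        ENNReal.ofReal_mul (K1_pos _).le
    _ = ENNReal.ofReal (K1 c) * ∫⁻ ρ in Ioc u v, ENNReal.ofReal (ρ ^ c) := by
        rw [J2 hc hu huv]
    _ = ∫⁻ ρ in Ioc u v, ENNReal.ofReal (K1 c * ρ ^ c) :=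
        (lint_scale (K1_pos _).le (measRpow _) _).symm
    _ ≤ ∫⁻ ρ in Ioc u v, ENNReal.ofReal (Real.sinh ρ ^ c) :=
        setLIntegral_mono' measurableSet_Ioc (fun x hx => ENNReal.ofReal_le_ofReal
          (P1 c (hu.trans hx.1) (hx.2.trans hv)).1)

lemma B1 {c : ℝ} (hc : c < 0) {t : ℝ} (ht : 1 ≤ t) :
    ∫⁻ ρ in Ioi t, ENNReal.ofReal (Real.sinh ρ ^ c)
      ≤ ENNReal.ofReal (K4 c * (Real.exp (c*t)/(-c))) := by
  calc ∫⁻ ρ in Ioi t, ENNReal.ofReal (Real.sinh ρ ^ c)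
      ≤ ∫⁻ ρ in Ioi t, ENNReal.ofReal (K4 c * Real.exp (c * ρ)) :=
        setLIntegral_mono' measurableSet_Ioi (fun x hx => ENNReal.ofReal_le_ofReal
          (P2 c (ht.trans hx.le)).2)
    _ = ENNReal.ofReal (K4 c) * ∫⁻ ρ in Ioi t, ENNReal.ofReal (Real.exp (c * ρ)) :=
        lint_scale (K4_pos _).le (measExpMul _) _
    _ = ENNReal.ofReal (K4 c) * ENNReal.ofReal (Real.exp (c*t)/(-c)) := by rw [J4 hc]
    _ = ENNReal.ofReal (K4 c * (Real.exp (c*t)/(-c))) :=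
        (ENNReal.ofReal_mul (K4_pos _).le).symm

lemma B2 {c : ℝ} (hc : c < 0) {t : ℝ} (ht : 1 ≤ t) :
    ENNReal.ofReal (K3 c * (Real.exp (c*t)/(-c)))
      ≤ ∫⁻ ρ in Ioi t, ENNReal.ofReal (Real.sinh ρ ^ c) := by
  calc ENNReal.ofReal (K3 c * (Real.exp (c*t)/(-c)))
      = ENNReal.ofReal (K3 c) * ENNReal.ofReal (Real.exp (c*t)/(-c)) :=
        ENNReal.ofReal_mul (K3_pos _).le
    _ = ENNReal.ofReal (K3 c) * ∫⁻ ρ in Ioi t, ENNReal.ofReal (Real.exp (c * ρ)) := by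
        rw [J4 hc]
    _ = ∫⁻ ρ in Ioi t, ENNReal.ofReal (K3 c * Real.exp (c * ρ)) :=
        (lint_scale (K3_pos _).le (measExpMul _) _).symm
    _ ≤ ∫⁻ ρ in Ioi t, ENNReal.ofReal (Real.sinh ρ ^ c) :=
        setLIntegral_mono' measurableSet_Ioi (fun x hx => ENNReal.ofReal_le_ofReal
          (P2 c (ht.trans hx.le)).1)

lemma C1 {c : ℝ} (hc : c ≠ 0) {u v : ℝ} (hu : 1 ≤ u) (huv : u ≤ v) :
    ∫⁻ ρ in Ioc u v, ENNReal.ofReal (Real.sinh ρ ^ c)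
      ≤ ENNReal.ofReal (K4 c * ((Real.exp (c*v) - Real.exp (c*u))/c)) := by
  calc ∫⁻ ρ in Ioc u v, ENNReal.ofReal (Real.sinh ρ ^ c)
      ≤ ∫⁻ ρ in Ioc u v, ENNReal.ofReal (K4 c * Real.exp (c * ρ)) :=
        setLIntegral_mono' measurableSet_Ioc (fun x hx => ENNReal.ofReal_le_ofReal
          (P2 c (hu.trans hx.1.le)).2)
    _ = ENNReal.ofReal (K4 c) * ∫⁻ ρ in Ioc u v, ENNReal.ofReal (Real.exp (c * ρ)) :=
        lint_scale (K4_pos _).le (measExpMul _) _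
    _ = ENNReal.ofReal (K4 c) * ENNReal.ofReal ((Real.exp (c*v) - Real.exp (c*u))/c) := by
        rw [J3 hc huv]
    _ = ENNReal.ofReal (K4 c * ((Real.exp (c*v) - Real.exp (c*u))/c)) :=
        (ENNReal.ofReal_mul (K4_pos _).le).symm

lemma C2 {c : ℝ} (hc : c ≠ 0) {u v : ℝ} (hu : 1 ≤ u) (huv : u ≤ v) :
    ENNReal.ofReal (K3 c * ((Real.exp (c*v) - Real.exp (c*u))/c))
      ≤ ∫⁻ ρ in Ioc u v, ENNReal.ofReal (Real.sinh ρ ^ c) := by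
  calc ENNReal.ofReal (K3 c * ((Real.exp (c*v) - Real.exp (c*u))/c))
      = ENNReal.ofReal (K3 c) * ENNReal.ofReal ((Real.exp (c*v) - Real.exp (c*u))/c) :=
        ENNReal.ofReal_mul (K3_pos _).le
    _ = ENNReal.ofReal (K3 c) * ∫⁻ ρ in Ioc u v, ENNReal.ofReal (Real.exp (c * ρ)) := by
        rw [J3 hc huv]
    _ = ∫⁻ ρ in Ioc u v, ENNReal.ofReal (K3 c * Real.exp (c * ρ)) :=
        (lint_scale (K3_pos _).le (measExpMul _) _).symm
    _ ≤ ∫⁻ ρ in Ioc u v, ENNReal.ofReal (Real.sinh ρ ^ c) :=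
        setLIntegral_mono' measurableSet_Ioc (fun x hx => ENNReal.ofReal_le_ofReal
          (P2 c (hu.trans hx.1.le)).1)

lemma C0 {c : ℝ} (hc : c ≤ 0) {u v : ℝ} (hu : 1 ≤ u) (huv : u ≤ v) :
    ∫⁻ ρ in Ioc u v, ENNReal.ofReal (Real.sinh ρ ^ c)
      ≤ ENNReal.ofReal (K4 c * (v - u)) := by
  have step : ∫⁻ ρ in Ioc u v, ENNReal.ofReal (Real.sinh ρ ^ c)
      ≤ ∫⁻ _ρ in Ioc u v, ENNReal.ofReal (K4 c) := by
    refine setLIntegral_mono' measurableSet_Ioc (fun x hx => ENNReal.ofReal_le_ofReal ?_)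
    have h2 := (P2 c (hu.trans hx.1.le)).2
    have h3 : Real.exp (c * x) ≤ 1 := by
      rw [Real.exp_le_one_iff]
      have hx0 : (0:ℝ) ≤ x := by linarith [hx.1, hu]
      exact mul_nonpos_of_nonpos_of_nonneg hc hx0
    nlinarith [K4_pos c]
  rw [setLIntegral_const] at step
  calc ∫⁻ ρ in Ioc u v, ENNReal.ofReal (Real.sinh ρ ^ c)
      ≤ ENNReal.ofReal (K4 c) * volume (Ioc u v) := step
    _ = ENNReal.ofReal (K4 c) * ENNReal.ofReal (v - u) := by rw [Real.volume_Ioc]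
    _ = ENNReal.ofReal (K4 c * (v - u)) := (ENNReal.ofReal_mul (K4_pos _).le).symm

-- chunk 5: F and G bounds
noncomputable def Fint (a t : ℝ) : ℝ≥0∞ := ∫⁻ ρ in Ioi t, ENNReal.ofReal (Real.sinh ρ ^ (a - 1))
noncomputable def Gint (b t : ℝ) : ℝ≥0∞ := ∫⁻ ρ in Ioc 0 t, ENNReal.ofReal (Real.sinh ρ ^ (b - 1))

noncomputable def CF (a : ℝ) : ℝ := K2 (a-1)/(-a) + K4 (a-1) * Real.exp (a-1)/(1-a)

lemma CF_pos {a : ℝ} (ha : a < 0) : 0 < CF a := by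
  have := K2_pos (a-1); have := K4_pos (a-1); have := Real.exp_pos (a-1)
  have h1 : (0:ℝ) < -a := by linarith
  have h2 : (0:ℝ) < 1 - a := by linarith
  unfold CF; positivity

lemma one_le_rpow_neg {t e : ℝ} (ht : 0 < t) (ht1 : t ≤ 1) (he : e ≤ 0) : 1 ≤ t ^ e :=
  Real.one_le_rpow_of_pos_of_le_one_of_nonpos ht ht1 he

lemma FU1 {a : ℝ} (ha : a < 0) {t : ℝ} (ht : 0 < t) (ht1 : t ≤ 1) :
    Fint a t ≤ ENNReal.ofReal (CF a * t ^ a) := by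
  have hne : a - 1 ≠ -1 := by intro h; apply absurd ha; simp [show a = 0 by linarith]
  have hlt : a - 1 < 0 := by linarith
  have hna : (0:ℝ) < -a := by linarith
  have h1a : (0:ℝ) < 1 - a := by linarith
  have ht1a : (1:ℝ) ≤ t ^ a := one_le_rpow_neg ht ht1 ha.le
  have htanz : (0:ℝ) ≤ t ^ a := by linarith
  rw [Fint,
    show Ioi t = Ioc t 1 ∪ Ioi (1:ℝ) from (Ioc_union_Ioi_eq_Ioi ht1).symm,
    lintegral_union measurableSet_Ioi Ioc_disjoint_Ioi_same]
  have e1 := A1 hne ht ht1 le_rfl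
  have e2 := B1 hlt (le_refl (1:ℝ))
  have ea : a - 1 + 1 = a := by ring
  rw [ea, Real.one_rpow] at e1
  set X1 : ℝ := K2 (a-1) * ((1 - t^a)/a) with hX1
  set X2 : ℝ := K4 (a-1) * (Real.exp ((a-1)*1)/(-(a-1))) with hX2
  have r1 : X1 = (K2 (a-1)/(-a)) * (t^a - 1) := by
    have haz : a ≠ 0 := ne_of_lt ha
    rw [hX1]; field_simp; ring
  have r2 : X2 = K4 (a-1) * Real.exp (a-1)/(1-a) := by
    rw [hX2, mul_one]
    rw [show -(a-1) = 1 - a by ring]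
    ring
  have hK2 := K2_pos (a-1); have hK4 := K4_pos (a-1); have hE := Real.exp_pos (a-1)
  have hX1nn : 0 ≤ X1 := by
    rw [r1]
    exact mul_nonneg (div_nonneg hK2.le hna.le) (by linarith)
  have hX2nn : 0 ≤ X2 := by
    rw [r2, mul_div_assoc]
    apply mul_nonneg hK4.le (div_nonneg hE.le h1a.le)
  have hsum : X1 + X2 ≤ CF a * t ^ a := by
    rw [r1, r2, CF]
    have hc1 : (0:ℝ) ≤ K2 (a-1)/(-a) := by positivity
    have hc2 : (0:ℝ) ≤ K4 (a-1) * Real.exp (a-1)/(1-a) := by positivity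
    nlinarith [mul_le_mul_of_nonneg_left ht1a hc2]
  calc (∫⁻ ρ in Ioc t 1, ENNReal.ofReal (Real.sinh ρ ^ (a-1))) +
        ∫⁻ ρ in Ioi 1, ENNReal.ofReal (Real.sinh ρ ^ (a-1))
      ≤ ENNReal.ofReal X1 + ENNReal.ofReal X2 := add_le_add e1 e2
    _ = ENNReal.ofReal (X1 + X2) := (ENNReal.ofReal_add hX1nn hX2nn).symm
    _ ≤ ENNReal.ofReal (CF a * t ^ a) := ENNReal.ofReal_le_ofReal hsum

lemma FU2 {a : ℝ} (ha : a < 0) {t : ℝ} (ht : 1 ≤ t) :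
    Fint a t ≤ ENNReal.ofReal (K4 (a-1)/(1-a) * Real.exp ((a-1)*t)) := by
  have hlt : a - 1 < 0 := by linarith
  have := B1 hlt ht
  rw [show K4 (a-1) * (Real.exp ((a-1)*t)/(-(a-1)))
      = K4 (a-1)/(1-a) * Real.exp ((a-1)*t) by rw [show -(a-1) = 1-a by ring]; ring] at this
  exact this

lemma FL2 {a : ℝ} (ha : a < 0) {t : ℝ} (ht : 1 ≤ t) :
    ENNReal.ofReal (K3 (a-1)/(1-a) * Real.exp ((a-1)*t)) ≤ Fint a t := by
  have hlt : a - 1 < 0 := by linarith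
  have := B2 hlt ht
  rw [show K3 (a-1) * (Real.exp ((a-1)*t)/(-(a-1)))
      = K3 (a-1)/(1-a) * Real.exp ((a-1)*t) by rw [show -(a-1) = 1-a by ring]; ring] at this
  exact this

lemma FL1 {a : ℝ} (ha : a < 0) {t : ℝ} (ht : 0 < t) (ht1 : t ≤ 1) :
    ENNReal.ofReal (K1 (a-1) * ((t^a - 1)/(-a))) ≤ Fint a t := by
  have hne : a - 1 ≠ -1 := by intro h; apply absurd ha; simp [show a = 0 by linarith]
  have e := A2 hne ht ht1 le_rfl
  have ea : a - 1 + 1 = a := by ring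
  rw [ea, Real.one_rpow] at e
  have hr : (1 - t^a)/a = (t^a - 1)/(-a) := by
    rw [div_neg, ← neg_div, neg_sub]
  rw [hr] at e
  exact e.trans (lintegral_mono_set Ioc_subset_Ioi_self)

lemma GU1 {b : ℝ} (hb : 0 < b) {t : ℝ} (ht : 0 < t) (ht1 : t ≤ 1) :
    Gint b t ≤ ENNReal.ofReal (K2 (b-1)/b * t ^ b) := by
  have hc : (-1:ℝ) < b - 1 := by linarith
  have step : Gint b t ≤ ENNReal.ofReal (K2 (b-1)) *
      ∫⁻ x in Ioc 0 t, ENNReal.ofReal (x ^ (b-1)) := by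
    rw [Gint, ← lint_scale (K2_pos _).le (measRpow _)]
    exact setLIntegral_mono' measurableSet_Ioc (fun x hx => ENNReal.ofReal_le_ofReal
      (P1 (b-1) hx.1 (hx.2.trans ht1)).2)
  rw [J1 hc ht] at step
  have eb : b - 1 + 1 = b := by ring
  rw [eb] at step
  calc Gint b t ≤ ENNReal.ofReal (K2 (b-1)) * ENNReal.ofReal (t^b/b) := step
    _ = ENNReal.ofReal (K2 (b-1) * (t^b/b)) := (ENNReal.ofReal_mul (K2_pos _).le).symm
    _ = ENNReal.ofReal (K2 (b-1)/b * t^b) := by rw [show K2 (b-1) * (t^b/b) = K2 (b-1)/b * t^b by ring]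

lemma GL1 {b : ℝ} (hb : 0 < b) {t : ℝ} (ht : 0 < t) (ht1 : t ≤ 1) :
    ENNReal.ofReal (K1 (b-1)/b * t ^ b) ≤ Gint b t := by
  have hc : (-1:ℝ) < b - 1 := by linarith
  have step : ENNReal.ofReal (K1 (b-1)) *
      ∫⁻ x in Ioc 0 t, ENNReal.ofReal (x ^ (b-1)) ≤ Gint b t := by
    rw [Gint, ← lint_scale (K1_pos _).le (measRpow _)]
    exact setLIntegral_mono' measurableSet_Ioc (fun x hx => ENNReal.ofReal_le_ofReal
      (P1 (b-1) hx.1 (hx.2.trans ht1)).1)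
  rw [J1 hc ht] at step
  have eb : b - 1 + 1 = b := by ring
  rw [eb] at step
  calc ENNReal.ofReal (K1 (b-1)/b * t^b)
      = ENNReal.ofReal (K1 (b-1) * (t^b/b)) := by
        rw [show K1 (b-1) * (t^b/b) = K1 (b-1)/b * t^b by ring]
    _ = ENNReal.ofReal (K1 (b-1)) * ENNReal.ofReal (t^b/b) := ENNReal.ofReal_mul (K1_pos _).le
    _ ≤ Gint b t := step

lemma Gsplit {b t : ℝ} (ht : 1 ≤ t) :
    Gint b t = Gint b 1 + ∫⁻ ρ in Ioc 1 t, ENNReal.ofReal (Real.sinh ρ ^ (b-1)) := by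
  rw [Gint, Gint, show Ioc (0:ℝ) t = Ioc 0 1 ∪ Ioc 1 t from
      (Ioc_union_Ioc_eq_Ioc zero_le_one ht).symm,
    lintegral_union measurableSet_Ioc (Set.Ioc_disjoint_Ioc_of_le le_rfl)]

lemma GU2a {b : ℝ} (hb : 0 < b) (hb1 : b ≤ 1) {t : ℝ} (ht : 1 ≤ t) :
    Gint b t ≤ ENNReal.ofReal ((K2 (b-1)/b + K4 (b-1)) * t) := by
  have h1 := GU1 hb one_pos le_rfl
  rw [Real.one_rpow, mul_one] at h1
  have h2 := C0 (show b - 1 ≤ 0 by linarith) le_rfl ht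
  have hK2 := K2_pos (b-1); have hK4 := K4_pos (b-1)
  have hnn1 : (0:ℝ) ≤ K2 (b-1)/b := by positivity
  have hnn2 : (0:ℝ) ≤ K4 (b-1) * (t-1) := by nlinarith
  calc Gint b t = Gint b 1 + ∫⁻ ρ in Ioc 1 t, ENNReal.ofReal (Real.sinh ρ ^ (b-1)) := Gsplit ht
    _ ≤ ENNReal.ofReal (K2 (b-1)/b) + ENNReal.ofReal (K4 (b-1) * (t-1)) := add_le_add h1 h2
    _ = ENNReal.ofReal (K2 (b-1)/b + K4 (b-1) * (t-1)) := (ENNReal.ofReal_add hnn1 hnn2).symm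
    _ ≤ ENNReal.ofReal ((K2 (b-1)/b + K4 (b-1)) * t) := by
        apply ENNReal.ofReal_le_ofReal; nlinarith

lemma GU2b {b : ℝ} (hb1 : 1 < b) {t : ℝ} (ht : 1 ≤ t) :
    Gint b t ≤ ENNReal.ofReal ((K2 (b-1)/b + K4 (b-1)/(b-1)) * Real.exp ((b-1)*t)) := by
  have hb : (0:ℝ) < b := by linarith
  have hbn : b - 1 ≠ 0 := by intro h; apply absurd hb1; simp [show b = 1 by linarith]
  have h1 := GU1 hb one_pos le_rfl
  rw [Real.one_rpow, mul_one] at h1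
  have h2 := C1 hbn le_rfl ht
  have hK2 := K2_pos (b-1); have hK4 := K4_pos (b-1)
  have hb1' : (0:ℝ) < b - 1 := by linarith
  have hnn1 : (0:ℝ) ≤ K2 (b-1)/b := by positivity
  have hE1 : (1:ℝ) ≤ Real.exp ((b-1)*t) := by
    have h := Real.exp_le_exp.2 (show (0:ℝ) ≤ (b-1)*t by nlinarith)
    rwa [Real.exp_zero] at h
  have hEmono : Real.exp ((b-1)*1) ≤ Real.exp ((b-1)*t) := Real.exp_le_exp.2 (by nlinarith)
  have hnn2 : (0:ℝ) ≤ K4 (b-1) * ((Real.exp ((b-1)*t) - Real.exp ((b-1)*1))/(b-1)) := by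
    apply mul_nonneg hK4.le; apply div_nonneg _ hb1'.le; linarith
  calc Gint b t = Gint b 1 + ∫⁻ ρ in Ioc 1 t, ENNReal.ofReal (Real.sinh ρ ^ (b-1)) := Gsplit ht
    _ ≤ ENNReal.ofReal (K2 (b-1)/b) +
        ENNReal.ofReal (K4 (b-1) * ((Real.exp ((b-1)*t) - Real.exp ((b-1)*1))/(b-1))) :=
        add_le_add h1 h2
    _ = ENNReal.ofReal (K2 (b-1)/b +
        K4 (b-1) * ((Real.exp ((b-1)*t) - Real.exp ((b-1)*1))/(b-1))) :=
        (ENNReal.ofReal_add hnn1 hnn2).symm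
    _ ≤ ENNReal.ofReal ((K2 (b-1)/b + K4 (b-1)/(b-1)) * Real.exp ((b-1)*t)) := by
        apply ENNReal.ofReal_le_ofReal
        have e1 : K2 (b-1)/b ≤ K2 (b-1)/b * Real.exp ((b-1)*t) :=
          le_mul_of_one_le_right hnn1 hE1
        have h' : (Real.exp ((b-1)*t) - Real.exp ((b-1)*1))/(b-1)
            ≤ Real.exp ((b-1)*t)/(b-1) :=
          (div_le_div_iff_of_pos_right hb1').2 (by linarith [Real.exp_pos ((b-1)*1)])
        have e2 : K4 (b-1) * ((Real.exp ((b-1)*t) - Real.exp ((b-1)*1))/(b-1))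
            ≤ K4 (b-1)/(b-1) * Real.exp ((b-1)*t) := by
          calc K4 (b-1) * ((Real.exp ((b-1)*t) - Real.exp ((b-1)*1))/(b-1))
              ≤ K4 (b-1) * (Real.exp ((b-1)*t)/(b-1)) :=
                mul_le_mul_of_nonneg_left h' hK4.le
            _ = K4 (b-1)/(b-1) * Real.exp ((b-1)*t) := by ring
        nlinarith [e1, e2]

noncomputable def cG2 (b : ℝ) : ℝ := K3 (b-1) * (1 - Real.exp (-(b-1)))/(b-1)

lemma cG2_pos {b : ℝ} (hb1 : 1 < b) : 0 < cG2 b := by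
  have h1 : Real.exp (-(b-1)) < 1 := by
    rw [Real.exp_lt_one_iff]; linarith
  have := K3_pos (b-1)
  have hb1' : (0:ℝ) < b - 1 := by linarith
  rw [cG2]
  apply div_pos (mul_pos this (by linarith)) hb1'

lemma GL2 {b : ℝ} (hb1 : 1 < b) {t : ℝ} (ht : 2 ≤ t) :
    ENNReal.ofReal (cG2 b * Real.exp ((b-1)*t)) ≤ Gint b t := by
  have hbn : b - 1 ≠ 0 := by intro h; apply absurd hb1; simp [show b = 1 by linarith]
  have hb1' : (0:ℝ) < b - 1 := by linarith
  have h2 := C2 hbn le_rfl (show (1:ℝ) ≤ t by linarith)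
  have key : Real.exp ((b-1)*1) ≤ Real.exp (-(b-1)) * Real.exp ((b-1)*t) := by
    rw [← Real.exp_add]
    apply Real.exp_le_exp.2
    nlinarith
  have h' : (1 - Real.exp (-(b-1))) * Real.exp ((b-1)*t)
      ≤ Real.exp ((b-1)*t) - Real.exp ((b-1)*1) := by nlinarith [key]
  have hreal : cG2 b * Real.exp ((b-1)*t)
      ≤ K3 (b-1) * ((Real.exp ((b-1)*t) - Real.exp ((b-1)*1))/(b-1)) := by
    calc cG2 b * Real.exp ((b-1)*t)
        = K3 (b-1) * (((1 - Real.exp (-(b-1))) * Real.exp ((b-1)*t))/(b-1)) := by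
          rw [cG2]; ring
      _ ≤ K3 (b-1) * ((Real.exp ((b-1)*t) - Real.exp ((b-1)*1))/(b-1)) :=
          mul_le_mul_of_nonneg_left ((div_le_div_iff_of_pos_right hb1').2 h') (K3_pos _).le
  calc ENNReal.ofReal (cG2 b * Real.exp ((b-1)*t))
      ≤ ENNReal.ofReal (K3 (b-1) * ((Real.exp ((b-1)*t) - Real.exp ((b-1)*1))/(b-1))) :=
        ENNReal.ofReal_le_ofReal hreal
    _ ≤ ∫⁻ ρ in Ioc 1 t, ENNReal.ofReal (Real.sinh ρ ^ (b-1)) := h2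
    _ ≤ Gint b t := by
        rw [Gint]; exact lintegral_mono_set (Ioc_subset_Ioc_left zero_le_one)

lemma Gdiv {b : ℝ} (hb : b ≤ 0) {t : ℝ} (ht : 0 < t) : Gint b t = ⊤ := by
  set u : ℝ := min t 1 with hu
  have hu0 : 0 < u := lt_min ht one_pos
  have hu1 : u ≤ 1 := min_le_right _ _
  have hdiv : ∫⁻ x in Ioc 0 u, ENNReal.ofReal (x ^ (b-1)) = ⊤ :=
    Jdiv (by linarith : b - 1 ≤ -1) hu0
  have step : ENNReal.ofReal (K1 (b-1)) * ∫⁻ x in Ioc 0 u, ENNReal.ofReal (x ^ (b-1))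
      ≤ ∫⁻ ρ in Ioc 0 u, ENNReal.ofReal (Real.sinh ρ ^ (b-1)) := by
    rw [← lint_scale (K1_pos _).le (measRpow _)]
    exact setLIntegral_mono' measurableSet_Ioc (fun x hx => ENNReal.ofReal_le_ofReal
      (P1 (b-1) hx.1 (hx.2.trans hu1)).1)
  rw [hdiv, ENNReal.mul_top (ENNReal.ofReal_pos.2 (K1_pos _)).ne'] at step
  have hfin : (⊤:ℝ≥0∞) ≤ Gint b t := by
    refine step.trans ?_
    rw [Gint]
    exact lintegral_mono_set (Ioc_subset_Ioc_right (min_le_left _ _))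
  exact top_le_iff.1 hfin

-- chunk 6: combine lemmas and main aux theorem
lemma combine_ofReal {x y : ℝ} (hx : 0 < x) (hy : 0 < y) (r s : ℝ) :
    ENNReal.ofReal x ^ r * ENNReal.ofReal y ^ s = ENNReal.ofReal (x ^ r * y ^ s) := by
  rw [ENNReal.ofReal_rpow_of_pos hx, ENNReal.ofReal_rpow_of_pos hy,
    ← ENNReal.ofReal_mul (Real.rpow_nonneg hx.le _)]

lemma expand1 {x y : ℝ} (hx : 0 ≤ x) (hy : 0 ≤ y) (u v r s t : ℝ) :
    (x * Real.exp (u*t))^r * (y * Real.exp (v*t))^s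
      = x^r * y^s * Real.exp ((u*r + v*s)*t) := by
  rw [Real.mul_rpow hx (Real.exp_pos _).le, Real.mul_rpow hy (Real.exp_pos _).le,
    exp_rpow', exp_rpow', mul_mul_mul_comm, ← Real.exp_add,
    show r*(u*t) + s*(v*t) = (u*r+v*s)*t by ring]

lemma expand2 {x y : ℝ} (hx : 0 ≤ x) (hy : 0 ≤ y) (u v r s : ℝ) {t : ℝ} (ht : 0 < t) :
    (x * t^u)^r * (y * t^v)^s = x^r * y^s * t^(u*r + v*s) := by
  rw [Real.mul_rpow hx (Real.rpow_nonneg ht.le _), Real.mul_rpow hy (Real.rpow_nonneg ht.le _),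
    ← Real.rpow_mul ht.le, ← Real.rpow_mul ht.le, mul_mul_mul_comm, ← Real.rpow_add ht]

lemma expand3 {x y : ℝ} (hx : 0 ≤ x) (hy : 0 ≤ y) (u r s : ℝ) {t : ℝ} (ht : 0 < t) :
    (x * Real.exp (u*t))^r * (y * t)^s = x^r * y^s * (t^s * Real.exp (u*r*t)) := by
  rw [Real.mul_rpow hx (Real.exp_pos _).le, Real.mul_rpow hy ht.le, exp_rpow',
    show r*(u*t) = u*r*t by ring]
  ring

lemma growth {δ s t : ℝ} (hδ : 0 < δ) (hs : 0 < s) (ht : 0 ≤ t) :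
    t ^ s * Real.exp (-(δ * t)) ≤ (s/δ) ^ s := by
  have hsδ : 0 < s/δ := div_pos hs hδ
  have hu : δ/s * t ≤ Real.exp (δ/s * t) := by
    have := Real.add_one_le_exp (δ/s*t); linarith
  have h1 : t ≤ s/δ * Real.exp (δ/s * t) := by
    have h := mul_le_mul_of_nonneg_left hu hsδ.le
    calc t = s/δ * (δ/s * t) := by field_simp
      _ ≤ s/δ * Real.exp (δ/s*t) := h
  have h2 : t ^ s ≤ (s/δ * Real.exp (δ/s*t)) ^ s := Real.rpow_le_rpow ht h1 hs.le
  have h3 : (s/δ * Real.exp (δ/s*t)) ^ s = (s/δ)^s * Real.exp (δ*t) := by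
    rw [Real.mul_rpow hsδ.le (Real.exp_pos _).le, exp_rpow',
      show s * (δ/s*t) = δ*t by field_simp]
  rw [h3] at h2
  calc t^s * Real.exp (-(δ*t)) ≤ (s/δ)^s * Real.exp (δ*t) * Real.exp (-(δ*t)) :=
      mul_le_mul_of_nonneg_right h2 (Real.exp_pos _).le
    _ = (s/δ)^s := by rw [mul_assoc, ← Real.exp_add]; simp

theorem aux {a b r s : ℝ} (ha : a < 0) (hr : 0 < r) (hs : 0 < s) :
    (⨆ t ∈ Ioi (0:ℝ), Fint a t ^ r * Gint b t ^ s) < ⊤ ↔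
      (0 < b ∧ 0 ≤ a*r + b*s ∧ (a-1)*r + (b-1)*s ≤ 0) := by
  have h1a : (0:ℝ) < 1 - a := by linarith
  have hna : (0:ℝ) < -a := by linarith
  constructor
  · -- necessity
    intro hS
    have hle : ∀ t : ℝ, 0 < t → Fint a t ^ r * Gint b t ^ s ≤
        ⨆ t ∈ Ioi (0:ℝ), Fint a t ^ r * Gint b t ^ s := fun t ht =>
      le_iSup₂ (f := fun (t : ℝ) (_ : t ∈ Ioi (0:ℝ)) => Fint a t ^ r * Gint b t ^ s) t
        (mem_Ioi.2 ht)
    have hSne : (⨆ t ∈ Ioi (0:ℝ), Fint a t ^ r * Gint b t ^ s) ≠ ⊤ := hS.ne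
    -- Fint positive at every t ≥ 1
    have hFpos : ∀ t : ℝ, 1 ≤ t → 0 < Fint a t := by
      intro t ht
      refine lt_of_lt_of_le (ENNReal.ofReal_pos.2 ?_) (FL2 ha ht)
      have := K3_pos (a-1); have := Real.exp_pos ((a-1)*t)
      positivity
    have hb : 0 < b := by
      by_contra hble
      push_neg at hble
      have hG : Gint b 1 = ⊤ := Gdiv hble one_pos
      have hFne : Fint a 1 ^ r ≠ 0 := by
        intro h
        rcases ENNReal.rpow_eq_zero_iff.1 h with ⟨h0, _⟩ | ⟨_, hneg⟩
        · exact (hFpos 1 le_rfl).ne' h0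
        · linarith
      have htop : Fint a 1 ^ r * Gint b 1 ^ s = ⊤ := by
        rw [hG, ENNReal.top_rpow_of_pos hs, ENNReal.mul_top hFne]
      exact hSne (top_le_iff.1 (htop ▸ hle 1 one_pos))
    set S := ⨆ t ∈ Ioi (0:ℝ), Fint a t ^ r * Gint b t ^ s with hSdef
    have hM : (0:ℝ) < S.toReal + 1 := by positivity
    have hSlt : S < ENNReal.ofReal (S.toReal + 1) :=
      (ENNReal.lt_ofReal_iff_toReal_lt hSne).2 (by linarith)
    refine ⟨hb, ?_, ?_⟩
    · -- 0 ≤ a*r + b*s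
      by_contra h2
      push_neg at h2
      have hcF : (0:ℝ) < K1 (a-1)/(-(2*a)) := div_pos (K1_pos _) (by linarith)
      have hcG : (0:ℝ) < K1 (b-1)/b := div_pos (K1_pos _) hb
      set c0 : ℝ := (K1 (a-1)/(-(2*a)))^r * (K1 (b-1)/b)^s with hc0def
      have hc0 : 0 < c0 :=
        mul_pos (Real.rpow_pos_of_pos hcF r) (Real.rpow_pos_of_pos hcG s)
      have hlow : ∀ t : ℝ, 0 < t → t ≤ min ((2:ℝ) ^ a⁻¹) 1 →
          ENNReal.ofReal (c0 * t ^ (a*r+b*s)) ≤ Fint a t ^ r * Gint b t ^ s := by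
        intro t ht htle
        have ht1 : t ≤ 1 := htle.trans (min_le_right _ _)
        have hta2 : (2:ℝ) ≤ t ^ a := by
          have h21 : ((2:ℝ) ^ a⁻¹) ^ a ≤ t ^ a :=
            Real.rpow_le_rpow_of_nonpos ht (htle.trans (min_le_left _ _)) ha.le
          rwa [Real.rpow_inv_rpow (by norm_num) (ne_of_lt ha)] at h21
        have hFr : K1 (a-1)/(-(2*a)) * t^a ≤ K1 (a-1) * ((t^a - 1)/(-a)) := by
          have step : K1 (a-1) * t^a / (-(2*a)) ≤ K1 (a-1) * (t^a - 1) / (-a) := by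
            rw [div_le_div_iff₀ (by linarith) (by linarith)]
            have h5 : (K1 (a-1) * (-a)) * 2 ≤ (K1 (a-1) * (-a)) * t^a :=
              mul_le_mul_of_nonneg_left hta2 (mul_pos (K1_pos _) hna).le
            nlinarith [h5]
          calc K1 (a-1)/(-(2*a)) * t^a = K1 (a-1) * t^a / (-(2*a)) := by ring
            _ ≤ K1 (a-1) * (t^a - 1) / (-a) := step
            _ = K1 (a-1) * ((t^a-1)/(-a)) := by ring
        have hFlow : ENNReal.ofReal (K1 (a-1)/(-(2*a)) * t^a) ≤ Fint a t :=
          le_trans (ENNReal.ofReal_le_ofReal hFr) (FL1 ha ht ht1)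
        have hGlow : ENNReal.ofReal (K1 (b-1)/b * t^b) ≤ Gint b t := GL1 hb ht ht1
        calc ENNReal.ofReal (c0 * t ^ (a*r+b*s))
            = ENNReal.ofReal ((K1 (a-1)/(-(2*a)) * t^a)^r * (K1 (b-1)/b * t^b)^s) := by
              rw [expand2 hcF.le hcG.le a b r s ht, hc0def]
          _ = ENNReal.ofReal (K1 (a-1)/(-(2*a)) * t^a)^r *
              ENNReal.ofReal (K1 (b-1)/b * t^b)^s := by
              rw [combine_ofReal (mul_pos hcF (Real.rpow_pos_of_pos ht a))
                (mul_pos hcG (Real.rpow_pos_of_pos ht b))]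
          _ ≤ Fint a t ^ r * Gint b t ^ s :=
              mul_le_mul' (ENNReal.rpow_le_rpow hFlow hr.le) (ENNReal.rpow_le_rpow hGlow hs.le)
      set X : ℝ := ((S.toReal + 1)/c0) ^ (a*r+b*s)⁻¹ with hX
      have hXpos : 0 < X := Real.rpow_pos_of_pos (div_pos hM hc0) _
      set t : ℝ := min (min ((2:ℝ) ^ a⁻¹) 1) X with htdef
      have ht1pos : (0:ℝ) < min ((2:ℝ) ^ a⁻¹) 1 :=
        lt_min (Real.rpow_pos_of_pos two_pos _) one_pos
      have htpos : 0 < t := lt_min ht1pos hXpos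
      have hte : (S.toReal+1)/c0 ≤ t ^ (a*r+b*s) := by
        have h := Real.rpow_le_rpow_of_nonpos htpos (min_le_right _ X) (le_of_lt h2)
        rwa [Real.rpow_inv_rpow (div_pos hM hc0).le (ne_of_lt h2)] at h
      have hfin : ENNReal.ofReal (S.toReal+1) ≤ ENNReal.ofReal (c0 * t^(a*r+b*s)) := by
        apply ENNReal.ofReal_le_ofReal
        calc S.toReal + 1 = c0 * ((S.toReal+1)/c0) := by field_simp
          _ ≤ c0 * t^(a*r+b*s) := mul_le_mul_of_nonneg_left hte hc0.le
      have : S < S :=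
        lt_of_lt_of_le (lt_of_lt_of_le hSlt hfin)
          ((hlow t htpos (min_le_left _ _)).trans (hle t htpos))
      exact absurd this (lt_irrefl _)
    · -- (a-1)*r + (b-1)*s ≤ 0
      by_contra h3
      push_neg at h3
      have har : (a-1)*r < 0 := mul_neg_of_neg_of_pos (by linarith) hr
      have hb1 : 1 < b := by nlinarith
      have hdF : (0:ℝ) < K3 (a-1)/(1-a) := div_pos (K3_pos _) h1a
      have hcg := cG2_pos hb1
      set c1 : ℝ := (K3 (a-1)/(1-a))^r * (cG2 b)^s with hc1def
      have hc1 : 0 < c1 :=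
        mul_pos (Real.rpow_pos_of_pos hdF r) (Real.rpow_pos_of_pos hcg s)
      have hlow : ∀ t : ℝ, 2 ≤ t →
          ENNReal.ofReal (c1 * Real.exp (((a-1)*r+(b-1)*s)*t)) ≤
            Fint a t ^ r * Gint b t ^ s := by
        intro t ht2
        have ht1 : (1:ℝ) ≤ t := by linarith
        have hFlow := FL2 ha ht1
        have hGlow := GL2 hb1 ht2
        calc ENNReal.ofReal (c1 * Real.exp (((a-1)*r+(b-1)*s)*t))
            = ENNReal.ofReal ((K3 (a-1)/(1-a) * Real.exp ((a-1)*t))^r *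
                (cG2 b * Real.exp ((b-1)*t))^s) := by
              rw [expand1 hdF.le hcg.le (a-1) (b-1) r s t, hc1def]
          _ = ENNReal.ofReal (K3 (a-1)/(1-a) * Real.exp ((a-1)*t))^r *
              ENNReal.ofReal (cG2 b * Real.exp ((b-1)*t))^s := by
              rw [combine_ofReal (mul_pos hdF (Real.exp_pos _))
                (mul_pos hcg (Real.exp_pos _))]
          _ ≤ Fint a t ^ r * Gint b t ^ s :=
              mul_le_mul' (ENNReal.rpow_le_rpow hFlow hr.le) (ENNReal.rpow_le_rpow hGlow hs.le)
      set t : ℝ := max 2 (((a-1)*r+(b-1)*s)⁻¹ * Real.log ((S.toReal+1)/c1)) with htdef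
      have ht2 : (2:ℝ) ≤ t := le_max_left _ _
      have hte : (S.toReal+1)/c1 ≤ Real.exp (((a-1)*r+(b-1)*s)*t) := by
        have hlog : ((a-1)*r+(b-1)*s) * (((a-1)*r+(b-1)*s)⁻¹ * Real.log ((S.toReal+1)/c1))
            ≤ ((a-1)*r+(b-1)*s) * t :=
          mul_le_mul_of_nonneg_left (le_max_right _ _) h3.le
        rw [← mul_assoc, mul_inv_cancel₀ (ne_of_gt h3), one_mul] at hlog
        calc (S.toReal+1)/c1 = Real.exp (Real.log ((S.toReal+1)/c1)) :=
              (Real.exp_log (div_pos hM hc1)).symm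
          _ ≤ Real.exp (((a-1)*r+(b-1)*s)*t) := Real.exp_le_exp.2 hlog
      have hfin : ENNReal.ofReal (S.toReal+1) ≤
          ENNReal.ofReal (c1 * Real.exp (((a-1)*r+(b-1)*s)*t)) := by
        apply ENNReal.ofReal_le_ofReal
        calc S.toReal + 1 = c1 * ((S.toReal+1)/c1) := by field_simp
          _ ≤ c1 * Real.exp (((a-1)*r+(b-1)*s)*t) := mul_le_mul_of_nonneg_left hte hc1.le
      have : S < S :=
        lt_of_lt_of_le (lt_of_lt_of_le hSlt hfin)
          ((hlow t ht2).trans (hle t (by linarith)))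
      exact absurd this (lt_irrefl _)
  · -- sufficiency
    rintro ⟨hb, h2, h3⟩
    have hCF := CF_pos ha
    have hDF : (0:ℝ) < K4 (a-1)/(1-a) := div_pos (K4_pos _) h1a
    have hG1 : (0:ℝ) < K2 (b-1)/b := div_pos (K2_pos _) hb
    set C1 : ℝ := (CF a)^r * (K2 (b-1)/b)^s with hC1def
    set C2 : ℝ := (K4 (a-1)/(1-a))^r * (K2 (b-1)/b + K4 (b-1))^s * (s/((1-a)*r))^s with hC2def
    set C3 : ℝ := (K4 (a-1)/(1-a))^r * (K2 (b-1)/b + K4 (b-1)/(b-1))^s with hC3def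
    set C : ℝ := max C1 (max C2 C3) with hCdef
    have hbound : ∀ t ∈ Ioi (0:ℝ), Fint a t ^ r * Gint b t ^ s ≤ ENNReal.ofReal C := by
      intro t ht
      rw [mem_Ioi] at ht
      rcases le_or_gt t 1 with ht1 | ht1
      · -- small t
        have hFu := FU1 ha ht ht1
        have hGu := GU1 hb ht ht1
        calc Fint a t ^ r * Gint b t ^ s
            ≤ ENNReal.ofReal (CF a * t^a) ^ r * ENNReal.ofReal (K2 (b-1)/b * t^b) ^ s :=
              mul_le_mul' (ENNReal.rpow_le_rpow hFu hr.le) (ENNReal.rpow_le_rpow hGu hs.le)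
          _ = ENNReal.ofReal ((CF a * t^a)^r * (K2 (b-1)/b * t^b)^s) :=
              combine_ofReal (mul_pos hCF (Real.rpow_pos_of_pos ht a))
                (mul_pos hG1 (Real.rpow_pos_of_pos ht b)) r s
          _ = ENNReal.ofReal (C1 * t^(a*r+b*s)) := by
              rw [expand2 hCF.le hG1.le a b r s ht, hC1def]
          _ ≤ ENNReal.ofReal C := by
              apply ENNReal.ofReal_le_ofReal
              have h4 : t^(a*r+b*s) ≤ 1 := Real.rpow_le_one ht.le ht1 h2
              have hC1nn : 0 ≤ C1 := by
                rw [hC1def]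
                exact mul_nonneg (Real.rpow_nonneg hCF.le r) (Real.rpow_nonneg hG1.le s)
              calc C1 * t^(a*r+b*s) ≤ C1 * 1 := mul_le_mul_of_nonneg_left h4 hC1nn
                _ = C1 := mul_one _
                _ ≤ C := le_max_left _ _
      · -- large t
        have ht1' : (1:ℝ) ≤ t := ht1.le
        have hFu := FU2 ha ht1'
        rcases le_or_gt b 1 with hb1 | hb1
        · -- b ≤ 1
          have hGu := GU2a hb hb1 ht1'
          have hG2 : (0:ℝ) < K2 (b-1)/b + K4 (b-1) := add_pos hG1 (K4_pos _)
          calc Fint a t ^ r * Gint b t ^ s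
              ≤ ENNReal.ofReal (K4 (a-1)/(1-a) * Real.exp ((a-1)*t)) ^ r *
                ENNReal.ofReal ((K2 (b-1)/b + K4 (b-1)) * t) ^ s :=
                mul_le_mul' (ENNReal.rpow_le_rpow hFu hr.le) (ENNReal.rpow_le_rpow hGu hs.le)
            _ = ENNReal.ofReal ((K4 (a-1)/(1-a) * Real.exp ((a-1)*t))^r *
                ((K2 (b-1)/b + K4 (b-1)) * t)^s) :=
                combine_ofReal (by positivity) (by positivity) r s
            _ = ENNReal.ofReal ((K4 (a-1)/(1-a))^r * (K2 (b-1)/b + K4 (b-1))^s *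
                (t^s * Real.exp ((a-1)*r*t))) := by
                rw [expand3 hDF.le hG2.le (a-1) r s ht]
            _ ≤ ENNReal.ofReal C := by
              apply ENNReal.ofReal_le_ofReal
              have hδ : (0:ℝ) < (1-a)*r := mul_pos h1a hr
              have hgr : t^s * Real.exp ((a-1)*r*t) ≤ (s/((1-a)*r))^s := by
                have := growth hδ hs (by linarith : (0:ℝ) ≤ t)
                rwa [show -((1-a)*r*t) = (a-1)*r*t by ring] at this
              have hcoef : (0:ℝ) ≤ (K4 (a-1)/(1-a))^r * (K2 (b-1)/b + K4 (b-1))^s :=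
                mul_nonneg (Real.rpow_nonneg hDF.le r) (Real.rpow_nonneg hG2.le s)
              calc (K4 (a-1)/(1-a))^r * (K2 (b-1)/b + K4 (b-1))^s *
                    (t^s * Real.exp ((a-1)*r*t))
                  ≤ (K4 (a-1)/(1-a))^r * (K2 (b-1)/b + K4 (b-1))^s * (s/((1-a)*r))^s :=
                    mul_le_mul_of_nonneg_left hgr hcoef
                _ = C2 := by rw [hC2def]
                _ ≤ C := le_trans (le_max_left _ _) (le_max_right _ _)
        · -- b > 1
          have hGu := GU2b hb1 ht1'
          have hG3 : (0:ℝ) < K2 (b-1)/b + K4 (b-1)/(b-1) :=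
            add_pos hG1 (div_pos (K4_pos _) (by linarith))
          calc Fint a t ^ r * Gint b t ^ s
              ≤ ENNReal.ofReal (K4 (a-1)/(1-a) * Real.exp ((a-1)*t)) ^ r *
                ENNReal.ofReal ((K2 (b-1)/b + K4 (b-1)/(b-1)) * Real.exp ((b-1)*t)) ^ s :=
                mul_le_mul' (ENNReal.rpow_le_rpow hFu hr.le) (ENNReal.rpow_le_rpow hGu hs.le)
            _ = ENNReal.ofReal ((K4 (a-1)/(1-a) * Real.exp ((a-1)*t))^r *
                ((K2 (b-1)/b + K4 (b-1)/(b-1)) * Real.exp ((b-1)*t))^s) :=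
                combine_ofReal (by positivity) (by positivity) r s
            _ = ENNReal.ofReal (C3 * Real.exp (((a-1)*r+(b-1)*s)*t)) := by
                rw [expand1 hDF.le hG3.le (a-1) (b-1) r s t, hC3def]
            _ ≤ ENNReal.ofReal C := by
              apply ENNReal.ofReal_le_ofReal
              have hexp : Real.exp (((a-1)*r+(b-1)*s)*t) ≤ 1 := by
                rw [Real.exp_le_one_iff]
                exact mul_nonpos_of_nonpos_of_nonneg h3 (by linarith)
              have hC3nn : 0 ≤ C3 := by
                rw [hC3def]
                exact mul_nonneg (Real.rpow_nonneg hDF.le r) (Real.rpow_nonneg hG3.le s)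
              calc C3 * Real.exp (((a-1)*r+(b-1)*s)*t) ≤ C3 * 1 :=
                    mul_le_mul_of_nonneg_left hexp hC3nn
                _ = C3 := mul_one _
                _ ≤ C := le_trans (le_max_right _ _) (le_max_right _ _)
    exact lt_of_le_of_lt (iSup₂_le hbound) ENNReal.ofReal_lt_top

end MHB

theorem muckenhoupt_hyperbolic_caseB (n : ℕ) (hn : 2 ≤ n) (p q p' α β : ℝ)
    (hp : 1 < p) (hpq : p ≤ q) (hp' : p' = p / (p - 1))
    (hα : α + n < 0) :
    (⨆ t ∈ Ioi (0:ℝ),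
        (∫⁻ ρ in Ioi t, ENNReal.ofReal (Real.sinh ρ ^ (α + n - 1))) ^ (1/q) *
        (∫⁻ ρ in Ioc 0 t, ENNReal.ofReal (Real.sinh ρ ^ (β * (1 - p') + n - 1))) ^ (1/p')) < ⊤
      ↔ (0 < β * (1 - p') + n ∧
          0 ≤ (α + n) / q + (β * (1 - p') + n) / p' ∧
          (α + n) / q + (β * (1 - p') + n) / p' ≤ 1/q + 1/p') := by
  have hq : (0:ℝ) < q := lt_trans one_pos (lt_of_lt_of_le hp hpq)
  have hp'pos : (0:ℝ) < p' := by
    rw [hp']; exact div_pos (by linarith) (by linarith)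
  have hr : (0:ℝ) < 1/q := by positivity
  have hs : (0:ℝ) < 1/p' := by positivity
  have key := MHB.aux (a := α + n) (b := β*(1-p') + n) hα hr hs
  simp only [MHB.Fint, MHB.Gint] at key
  have e1 : (α + n)*(1/q) + (β*(1-p') + n)*(1/p') = (α + n)/q + (β*(1-p') + n)/p' := by
    ring
  have e2 : (α + n - 1)*(1/q) + (β*(1-p') + n - 1)*(1/p')
      = ((α + n)/q + (β*(1-p') + n)/p') - (1/q + 1/p') := by
    ring
  rw [e1, e2, sub_nonpos] at key
  exact key
end

section
/- Let $1<p\le q<\infty$, $s>0$, $p'=p/(p-1)$, and let $u,v:(0,\infty)\to(0,\infty)$ be measurable with $U(x)=\int_x^\infty u<\infty$ and $V(x)=\int_0^x v^{1-p'}<\infty$ positive for all $x>0$. Then $\sup_{x>0} U(x)^{1/q}V(x)^{1/p'}<\infty$ if and only if $\sup_{x>0}\left(\int_x^\infty u(y)V(y)^{q(1/p'-s)}dy\right)^{1/q}V(x)^s<\infty$. -/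
open MeasureTheory Set Filter Topology
open scoped ENNReal

lemma tail_bound {V : ℝ → ℝ} (hVc : ContinuousOn V (Ioi 0))
    {g : ℝ → ℝ≥0∞} {C r : ℝ}
    (H : ∀ w > (0:ℝ), ∫⁻ y in Ioi w, g y ≤ ENNReal.ofReal (C * V w ^ (-r)))
    (hC : 0 ≤ C) (hr : 0 ≤ r) {x t : ℝ} (hx : 0 < x) (ht : 0 < t)
    {S : Set ℝ} (hSx : S ⊆ Ioi x) (hSt : ∀ y ∈ S, t ≤ V y) :
    ∫⁻ y in S, g y ≤ ENNReal.ofReal (C * t ^ (-r)) := by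
  rcases S.eq_empty_or_nonempty with rfl | hne
  · simp
  have hbd : BddBelow S := ⟨x, fun y hy => (hSx hy).le⟩
  set a := sInf S with ha
  have hxa : x ≤ a := le_csInf hne fun y hy => (hSx hy).le
  have hapos : 0 < a := hx.trans_le hxa
  have hacl : a ∈ closure S := csInf_mem_closure hne hbd
  have hca : ContinuousAt V a := hVc.continuousAt (Ioi_mem_nhds hapos)
  have hVa : t ≤ V a := by
    have hnb : (𝓝[S] a).NeBot := mem_closure_iff_nhdsWithin_neBot.mp hacl
    exact ge_of_tendsto (hca.continuousWithinAt (s := S))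
      (eventually_nhdsWithin_of_forall hSt)
  calc ∫⁻ y in S, g y ≤ ∫⁻ y in Ici a, g y := lintegral_mono_set (fun y hy => csInf_le hbd hy)
    _ = ∫⁻ y in Ioi a, g y := by
        rw [Measure.restrict_congr_set (Ioi_ae_eq_Ici (a := a)).symm]
    _ ≤ ENNReal.ofReal (C * V a ^ (-r)) := H a hapos
    _ ≤ ENNReal.ofReal (C * t ^ (-r)) := by
        apply ENNReal.ofReal_le_ofReal
        exact mul_le_mul_of_nonneg_left
          (Real.rpow_le_rpow_of_nonpos ht hVa (neg_nonpos.mpr hr)) hC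

lemma main_bound {V : ℝ → ℝ} (hVm : Monotone V) (hVc : ContinuousOn V (Ioi 0))
    (hVpos : ∀ w > (0:ℝ), 0 < V w)
    {g : ℝ → ℝ≥0∞} (hg : Measurable g) {C β ρ : ℝ}
    (hC : 0 ≤ C) (hβ : 0 < β) (hβρ : β < ρ)
    (H : ∀ w > (0:ℝ), ∫⁻ y in Ioi w, g y ≤ ENNReal.ofReal (C * V w ^ (-ρ)))
    {x : ℝ} (hx : 0 < x) :
    ∫⁻ y in Ioi x, g y * ENNReal.ofReal (V y ^ β)
      ≤ ENNReal.ofReal ((1 + β / (ρ - β)) * C * V x ^ (β - ρ)) := by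
  have hVx : 0 < V x := hVpos x hx
  have hρβ : 0 < ρ - β := by linarith
  set h : ℝ → ℝ≥0∞ := fun t => ENNReal.ofReal (β * t ^ (β - 1)) with hh
  have hhm : Measurable h := by fun_prop
  have hsetm : ∀ t : ℝ, MeasurableSet {y : ℝ | t ≤ V y} := fun t =>
    measurableSet_le measurable_const hVm.measurable
  -- pointwise expansion
  have hexp : ∀ y ∈ Ioi x, ENNReal.ofReal (V y ^ β)
      = ENNReal.ofReal (V x ^ β) + ∫⁻ t in Ioc (V x) (V y), h t := by
    intro y hy
    have hVxy : V x ≤ V y := hVm (le_of_lt hy)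
    have hreal : ∫ t in Ioc (V x) (V y), β * t ^ (β - 1) = V y ^ β - V x ^ β := by
      rw [← intervalIntegral.integral_of_le hVxy, intervalIntegral.integral_const_mul,
        integral_rpow (Or.inl (by linarith))]
      have : β - 1 + 1 = β := by ring
      rw [this]
      field_simp
    have hint : IntegrableOn (fun t => β * t ^ (β - 1)) (Ioc (V x) (V y)) := by
      have := (intervalIntegral.intervalIntegrable_rpow' (a := V x) (b := V y)
        (r := β - 1) (by linarith)).const_mul β
      rwa [intervalIntegrable_iff_integrableOn_Ioc_of_le hVxy] at this
    have hnn : 0 ≤ᵐ[volume.restrict (Ioc (V x) (V y))] fun t => β * t ^ (β - 1) := by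
      refine (ae_restrict_iff' measurableSet_Ioc).mpr (ae_of_all _ fun t htt => ?_)
      exact mul_nonneg hβ.le (Real.rpow_nonneg (le_of_lt (hVx.trans htt.1)) _)
    have h1 : ∫⁻ t in Ioc (V x) (V y), h t = ENNReal.ofReal (V y ^ β - V x ^ β) := by
      rw [← hreal, ← ofReal_integral_eq_lintegral_ofReal hint hnn]
    rw [h1, ← ENNReal.ofReal_add (Real.rpow_nonneg hVx.le _) (by
      have := Real.rpow_le_rpow hVx.le hVxy hβ.le
      linarith)]
    congr 1; ring
  -- term 1 bound
  have hterm1 : ∫⁻ y in Ioi x, g y * ENNReal.ofReal (V x ^ β)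
      ≤ ENNReal.ofReal (C * V x ^ (β - ρ)) := by
    rw [lintegral_mul_const _ hg]
    calc (∫⁻ y in Ioi x, g y) * ENNReal.ofReal (V x ^ β)
        ≤ ENNReal.ofReal (C * V x ^ (-ρ)) * ENNReal.ofReal (V x ^ β) :=
          mul_le_mul_left (H x hx) _
      _ = ENNReal.ofReal (C * V x ^ (-ρ) * V x ^ β) :=
          (ENNReal.ofReal_mul (by positivity)).symm
      _ = ENNReal.ofReal (C * V x ^ (β - ρ)) := by
          rw [mul_assoc, ← Real.rpow_add hVx, show -ρ + β = β - ρ from by ring]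
  -- term 2 bound
  have hterm2 : ∫⁻ y in Ioi x, g y * ∫⁻ t in Ioc (V x) (V y), h t
      ≤ ENNReal.ofReal (β / (ρ - β) * (C * V x ^ (β - ρ))) := by
    have hD : MeasurableSet {p : ℝ × ℝ | V x < p.2 ∧ p.2 ≤ V p.1} :=
      (measurableSet_lt measurable_const measurable_snd).inter
        (measurableSet_le measurable_snd (hVm.measurable.comp measurable_fst))
    have hunc : (Function.uncurry fun y t => g y * (Ioc (V x) (V y)).indicator h t)
        = {p : ℝ × ℝ | V x < p.2 ∧ p.2 ≤ V p.1}.indicator (fun p => g p.1 * h p.2) := by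
      ext p
      by_cases hp : V x < p.2 ∧ p.2 ≤ V p.1
      · simp [Function.uncurry, Set.indicator_apply, Set.mem_Ioc, hp]
      · simp only [Function.uncurry, Set.indicator_apply, Set.mem_Ioc, Set.mem_setOf_eq, hp,
          if_false]
        exact mul_zero _
    have hmeas : AEMeasurable (Function.uncurry fun y t =>
        g y * (Ioc (V x) (V y)).indicator h t) ((volume.restrict (Ioi x)).prod volume) := by
      rw [hunc]
      exact (((hg.comp measurable_fst).mul (hhm.comp measurable_snd)).indicator hD).aemeasurable
    calc ∫⁻ y in Ioi x, g y * ∫⁻ t in Ioc (V x) (V y), h t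
        = ∫⁻ y in Ioi x, ∫⁻ t, g y * (Ioc (V x) (V y)).indicator h t := by
          refine setLIntegral_congr_fun measurableSet_Ioi (fun y _ => ?_)
          rw [← lintegral_indicator measurableSet_Ioc,
            lintegral_const_mul _ (hhm.indicator measurableSet_Ioc)]
      _ = ∫⁻ t, ∫⁻ y in Ioi x, g y * (Ioc (V x) (V y)).indicator h t :=
          lintegral_lintegral_swap hmeas
      _ ≤ ∫⁻ t, (Ioi (V x)).indicator
            (fun t => ENNReal.ofReal (β * C * t ^ (β - 1 - ρ))) t := by
          refine lintegral_mono fun t => ?_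
          by_cases hts : V x < t
          · have ht0 : 0 < t := hVx.trans hts
            calc ∫⁻ y in Ioi x, g y * (Ioc (V x) (V y)).indicator h t
                = ∫⁻ y in Ioi x, ({y : ℝ | t ≤ V y}).indicator (fun y => g y * h t) y := by
                  refine lintegral_congr fun y => ?_
                  by_cases hty : t ≤ V y
                  · simp [Set.indicator_apply, Set.mem_Ioc, hts, hty]
                  · simp [Set.indicator_apply, Set.mem_Ioc, hts, hty]
              _ = ∫⁻ y in {y : ℝ | t ≤ V y} ∩ Ioi x, g y * h t := by
                  rw [lintegral_indicator (hsetm t), Measure.restrict_restrict (hsetm t)]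
              _ = (∫⁻ y in {y : ℝ | t ≤ V y} ∩ Ioi x, g y) * h t := lintegral_mul_const _ hg
              _ ≤ ENNReal.ofReal (C * t ^ (-ρ)) * h t := by
                  refine mul_le_mul_left ?_ _
                  exact tail_bound hVc H hC (by linarith) hx ht0
                    inter_subset_right (fun y hy => hy.1)
              _ = ENNReal.ofReal (β * C * t ^ (β - 1 - ρ)) := by
                  rw [hh, ← ENNReal.ofReal_mul (by positivity)]
                  congr 1
                  rw [show β - 1 - ρ = -ρ + (β - 1) from by ring, Real.rpow_add ht0]
                  ring
              _ = (Ioi (V x)).indicator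
                    (fun t => ENNReal.ofReal (β * C * t ^ (β - 1 - ρ))) t :=
                  (Set.indicator_of_mem (mem_Ioi.mpr hts) (fun t => ENNReal.ofReal (β * C * t ^ (β - 1 - ρ)))).symm
          · have hz : ∀ y : ℝ, (Ioc (V x) (V y)).indicator h t = 0 := fun y =>
              Set.indicator_of_notMem (fun hmem => hts hmem.1) _
            simp [hz]
      _ = ∫⁻ t in Ioi (V x), ENNReal.ofReal (β * C * t ^ (β - 1 - ρ)) :=
          lintegral_indicator measurableSet_Ioi _
      _ = ENNReal.ofReal (∫ t in Ioi (V x), β * C * t ^ (β - 1 - ρ)) := by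
          rw [ofReal_integral_eq_lintegral_ofReal]
          · exact (integrableOn_Ioi_rpow_of_lt (by linarith) hVx).const_mul (β * C)
          · refine (ae_restrict_iff' measurableSet_Ioi).mpr (ae_of_all _ fun t htt => ?_)
            have ht0 : 0 < t := hVx.trans htt
            positivity
      _ = ENNReal.ofReal (β / (ρ - β) * (C * V x ^ (β - ρ))) := by
          congr 1
          rw [integral_const_mul, integral_Ioi_rpow_of_lt (by linarith) hVx,
            show β - 1 - ρ + 1 = β - ρ from by ring]
          have hbρ : β - ρ ≠ 0 := by linarith
          field_simp
          ring
  calc ∫⁻ y in Ioi x, g y * ENNReal.ofReal (V y ^ β)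
      = ∫⁻ y in Ioi x,
          (g y * ENNReal.ofReal (V x ^ β) + g y * ∫⁻ t in Ioc (V x) (V y), h t) := by
        refine setLIntegral_congr_fun measurableSet_Ioi (fun y hy => ?_)
        rw [hexp y hy, mul_add]
    _ = (∫⁻ y in Ioi x, g y * ENNReal.ofReal (V x ^ β))
          + ∫⁻ y in Ioi x, g y * ∫⁻ t in Ioc (V x) (V y), h t :=
        lintegral_add_left (hg.mul_const _) _
    _ ≤ ENNReal.ofReal (C * V x ^ (β - ρ))
          + ENNReal.ofReal (β / (ρ - β) * (C * V x ^ (β - ρ))) := add_le_add hterm1 hterm2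
    _ = ENNReal.ofReal ((1 + β / (ρ - β)) * C * V x ^ (β - ρ)) := by
        rw [← ENNReal.ofReal_add (by positivity) (by positivity)]
        congr 1
        ring

lemma aux_alg {K W : ℝ} (hK : 0 ≤ K) (hW : 0 < W) {c q : ℝ} (hq : q ≠ 0) :
    (K * W ^ (-(q * c))) ^ (1/q) * W ^ c = K ^ (1/q) := by
  rw [Real.mul_rpow hK (Real.rpow_nonneg hW.le _), ← Real.rpow_mul hW.le,
    mul_assoc, ← Real.rpow_add hW,
    show -(q*c)*(1/q) + c = 0 from by field_simp; ring, Real.rpow_zero, mul_one]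

theorem D1_iff_D2 (p q p' s : ℝ) (hp : 1 < p) (hpq : p ≤ q) (hs : 0 < s)
    (hp' : p' = p / (p - 1))
    (u v : ℝ → ℝ) (hu : Measurable u) (hv : Measurable v)
    (hupos : ∀ x ∈ Ioi (0:ℝ), 0 < u x) (hvpos : ∀ x ∈ Ioi (0:ℝ), 0 < v x)
    (huint : ∀ x > (0:ℝ), IntegrableOn u (Ioi x))
    (hvint : ∀ x > (0:ℝ), IntegrableOn (fun y => v y ^ (1 - p')) (Ioc 0 x))
    (hUpos : ∀ x > (0:ℝ), 0 < ∫ y in Ioi x, u y)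
    (hVpos : ∀ x > (0:ℝ), 0 < ∫ y in Ioc 0 x, v y ^ (1 - p')) :
    (⨆ x ∈ Ioi (0:ℝ),
        ENNReal.ofReal ((∫ y in Ioi x, u y) ^ (1/q) *
          (∫ y in Ioc 0 x, v y ^ (1 - p')) ^ (1/p'))) < ⊤
    ↔ (⨆ x ∈ Ioi (0:ℝ),
        (∫⁻ y in Ioi x,
            ENNReal.ofReal (u y * (∫ t in Ioc 0 y, v t ^ (1 - p')) ^ (q * (1/p' - s)))) ^ (1/q) *
          ENNReal.ofReal ((∫ y in Ioc 0 x, v y ^ (1 - p')) ^ s)) < ⊤ := by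
  have hq1 : 1 < q := lt_of_lt_of_le hp hpq
  have hq0 : 0 < q := by linarith
  have hp1 : 0 < p - 1 := by linarith
  have hp'1 : 1 < p' := by rw [hp', lt_div_iff₀ hp1]; linarith
  have hp'0 : 0 < p' := by linarith
  have hip' : 0 < 1/p' := by positivity
  have hqs : 0 < q * s := by positivity
  have hqip' : 0 < q * (1/p') := by positivity
  set V : ℝ → ℝ := fun x => ∫ y in Ioc 0 x, v y ^ (1 - p') with hVdef
  set U : ℝ → ℝ := fun x => ∫ y in Ioi x, u y with hUdef
  have hVa : ∀ x, V x = ∫ y in Ioc 0 x, v y ^ (1 - p') := fun _ => rfl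
  have hUa : ∀ x, U x = ∫ y in Ioi x, u y := fun _ => rfl
  simp only [← hVa, ← hUa]
  set γ : ℝ := q * (1/p' - s) with hγ
  have hγeq : γ = q * (1/p') - q * s := by rw [hγ]; ring
  have hV0 : ∀ w > (0:ℝ), 0 < V w := fun w hw => by rw [hVa]; exact hVpos w hw
  have hU0 : ∀ w > (0:ℝ), 0 < U w := fun w hw => by rw [hUa]; exact hUpos w hw
  have hVmono : Monotone V := by
    intro a b hab
    rw [hVa, hVa]
    rcases le_or_gt b 0 with hb | hb
    · rw [Ioc_eq_empty (by simpa using (hab.trans hb)), Ioc_eq_empty (by simpa using hb)]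
    · refine setIntegral_mono_set (hvint b hb) ?_ ?_
      · exact (ae_restrict_iff' measurableSet_Ioc).mpr (ae_of_all _ fun y hy =>
          Real.rpow_nonneg (hvpos y hy.1).le _)
      · exact HasSubset.Subset.eventuallyLE (Ioc_subset_Ioc_right hab)
  have hVmeas : Measurable V := hVmono.measurable
  have hVcont : ContinuousOn V (Ioi 0) := by
    intro a ha
    have ha0 : (0:ℝ) < a := mem_Ioi.mp ha
    have hb : (0:ℝ) < a + 1 := by linarith
    have hint : IntegrableOn (fun y => v y ^ (1 - p')) (Icc 0 (a+1)) :=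
      (integrableOn_Icc_iff_integrableOn_Ioc).mpr (hvint (a+1) hb)
    have hcont := intervalIntegral.continuousOn_primitive (f := fun y => v y ^ (1 - p')) (a := 0)
      (b := a+1) (μ := volume) hint
    have hca : ContinuousAt V a := by
      have heq : V = fun x => ∫ t in Ioc 0 x, v t ^ (1 - p') := funext hVa
      rw [heq]
      exact hcont.continuousAt (Icc_mem_nhds (by linarith) (by linarith))
    exact hca.continuousWithinAt
  have hUc : ∀ w > (0:ℝ), ∫⁻ y in Ioi w, ENNReal.ofReal (u y) = ENNReal.ofReal (U w) := by
    intro w hw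
    rw [hUa]
    refine (ofReal_integral_eq_lintegral_ofReal (huint w hw) ?_).symm
    exact (ae_restrict_iff' measurableSet_Ioi).mpr (ae_of_all _ fun y hy =>
      (hupos y (mem_Ioi.mpr (hw.trans (mem_Ioi.mp hy)))).le)
  have hLmeas : Measurable fun y => ENNReal.ofReal (u y * V y ^ γ) := by fun_prop
  constructor
  · -- D1 → D2
    intro hA
    set A' := (⨆ x ∈ Ioi (0:ℝ),
      ENNReal.ofReal (U x ^ (1/q) * V x ^ (1/p'))).toReal with hA'def
    have hA'0 : 0 ≤ A' := ENNReal.toReal_nonneg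
    have hA' : ∀ w > (0:ℝ), U w ^ (1/q) * V w ^ (1/p') ≤ A' := by
      intro w hw
      have hle := le_iSup₂ (f := fun x (_ : x ∈ Ioi (0:ℝ)) =>
        ENNReal.ofReal (U x ^ (1/q) * V x ^ (1/p'))) w (mem_Ioi.mpr hw)
      exact (ENNReal.ofReal_le_iff_le_toReal hA.ne).mp hle
    have hUb : ∀ w > (0:ℝ), U w ≤ A'^q * V w ^ (-(q * (1/p'))) := by
      intro w hw
      have hVw := hV0 w hw
      have hUw := hU0 w hw
      have h1 : U w ^ (1/q) ≤ A' * V w ^ (-(1/p')) := by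
        have hvp : (0:ℝ) < V w ^ (1/p') := Real.rpow_pos_of_pos hVw _
        rw [Real.rpow_neg hVw.le, ← div_eq_mul_inv, le_div_iff₀ hvp]
        exact hA' w hw
      calc U w = (U w ^ (1/q)) ^ q := by
            rw [← Real.rpow_mul hUw.le, one_div_mul_cancel hq0.ne', Real.rpow_one]
        _ ≤ (A' * V w ^ (-(1/p'))) ^ q :=
            Real.rpow_le_rpow (Real.rpow_nonneg hUw.le _) h1 hq0.le
        _ = A'^q * V w ^ (-(q * (1/p'))) := by
            rw [Real.mul_rpow hA'0 (Real.rpow_nonneg hVw.le _), ← Real.rpow_mul hVw.le,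
              show -(1/p') * q = -(q * (1/p')) from by ring]
    have hH : ∀ w > (0:ℝ), ∫⁻ y in Ioi w, ENNReal.ofReal (u y)
        ≤ ENNReal.ofReal (A'^q * V w ^ (-(q * (1/p')))) := by
      intro w hw
      rw [hUc w hw]
      exact ENNReal.ofReal_le_ofReal (hUb w hw)
    have hKex : ∃ K : ℝ, 0 ≤ K ∧ ∀ x > (0:ℝ),
        (∫⁻ y in Ioi x, ENNReal.ofReal (u y * V y ^ γ))
          ≤ ENNReal.ofReal (K * V x ^ (-(q * s))) := by
      rcases le_or_gt γ 0 with hγ0 | hγ0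
      · refine ⟨A'^q, by positivity, fun x hx => ?_⟩
        have hVx := hV0 x hx
        calc ∫⁻ y in Ioi x, ENNReal.ofReal (u y * V y ^ γ)
            ≤ ∫⁻ y in Ioi x, ENNReal.ofReal (u y) * ENNReal.ofReal (V x ^ γ) := by
              refine setLIntegral_mono (by fun_prop) fun y hy => ?_
              have hy0 : (0:ℝ) < y := hx.trans (mem_Ioi.mp hy)
              rw [← ENNReal.ofReal_mul (hupos y (mem_Ioi.mpr hy0)).le]
              refine ENNReal.ofReal_le_ofReal
                (mul_le_mul_of_nonneg_left ?_ (hupos y (mem_Ioi.mpr hy0)).le)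
              exact Real.rpow_le_rpow_of_nonpos hVx (hVmono (mem_Ioi.mp hy).le) hγ0
          _ = ENNReal.ofReal (U x) * ENNReal.ofReal (V x ^ γ) := by
              rw [lintegral_mul_const _ (by fun_prop), hUc x hx]
          _ ≤ ENNReal.ofReal (A'^q * V x ^ (-(q * (1/p')))) * ENNReal.ofReal (V x ^ γ) :=
              mul_le_mul_left (ENNReal.ofReal_le_ofReal (hUb x hx)) _
          _ = ENNReal.ofReal (A'^q * V x ^ (-(q * s))) := by
              rw [← ENNReal.ofReal_mul (by positivity), mul_assoc, ← Real.rpow_add hVx,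
                show -(q * (1/p')) + γ = -(q * s) from by rw [hγeq]; ring]
      · have hβρ : γ < q * (1/p') := by rw [hγeq]; linarith
        have hK0 : (0:ℝ) ≤ 1 + γ / (q * (1/p') - γ) :=
          add_nonneg zero_le_one (div_nonneg hγ0.le (by linarith))
        refine ⟨(1 + γ / (q * (1/p') - γ)) * A'^q, mul_nonneg hK0 (by positivity),
          fun x hx => ?_⟩
        calc ∫⁻ y in Ioi x, ENNReal.ofReal (u y * V y ^ γ)
            = ∫⁻ y in Ioi x, ENNReal.ofReal (u y) * ENNReal.ofReal (V y ^ γ) := by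
              refine setLIntegral_congr_fun measurableSet_Ioi (fun y hy => ?_)
              rw [← ENNReal.ofReal_mul (hupos y (mem_Ioi.mpr (hx.trans (mem_Ioi.mp hy)))).le]
          _ ≤ ENNReal.ofReal ((1 + γ / (q * (1/p') - γ)) * A'^q * V x ^ (γ - q * (1/p'))) :=
              main_bound hVmono hVcont hV0 (by fun_prop) (by positivity) hγ0 hβρ hH hx
          _ = ENNReal.ofReal ((1 + γ / (q * (1/p') - γ)) * A'^q * V x ^ (-(q * s))) := by
              rw [show γ - q * (1/p') = -(q * s) from by rw [hγeq]; ring]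
    obtain ⟨K, hK0, hKb⟩ := hKex
    refine lt_of_le_of_lt (iSup₂_le fun x hx => ?_)
      (ENNReal.ofReal_lt_top (r := K ^ (1/q)))
    have hx0 := mem_Ioi.mp hx
    have hVx := hV0 x hx0
    calc (∫⁻ y in Ioi x, ENNReal.ofReal (u y * V y ^ γ)) ^ (1/q) * ENNReal.ofReal (V x ^ s)
        ≤ (ENNReal.ofReal (K * V x ^ (-(q * s)))) ^ (1/q) * ENNReal.ofReal (V x ^ s) :=
          mul_le_mul_left (ENNReal.rpow_le_rpow (hKb x hx0) (by positivity)) _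
      _ = ENNReal.ofReal ((K * V x ^ (-(q * s))) ^ (1/q)) * ENNReal.ofReal (V x ^ s) := by
          rw [ENNReal.ofReal_rpow_of_nonneg (by positivity) (by positivity)]
      _ = ENNReal.ofReal ((K * V x ^ (-(q * s))) ^ (1/q) * V x ^ s) :=
          (ENNReal.ofReal_mul (by positivity)).symm
      _ = ENNReal.ofReal (K ^ (1/q)) := by rw [aux_alg hK0 hVx hq0.ne']
  · -- D2 → D1
    intro hB
    set B' := (⨆ x ∈ Ioi (0:ℝ),
      (∫⁻ y in Ioi x, ENNReal.ofReal (u y * V y ^ γ)) ^ (1/q)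
        * ENNReal.ofReal (V x ^ s)).toReal with hB'def
    have hB'0 : 0 ≤ B' := ENNReal.toReal_nonneg
    have hL : ∀ w > (0:ℝ), (∫⁻ y in Ioi w, ENNReal.ofReal (u y * V y ^ γ))
        ≤ ENNReal.ofReal (B'^q * V w ^ (-(q * s))) := by
      intro w hw
      have hVw := hV0 w hw
      have hle := le_iSup₂ (f := fun x (_ : x ∈ Ioi (0:ℝ)) =>
        (∫⁻ y in Ioi x, ENNReal.ofReal (u y * V y ^ γ)) ^ (1/q)
          * ENNReal.ofReal (V x ^ s)) w (mem_Ioi.mpr hw)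
      have hle' : (∫⁻ y in Ioi w, ENNReal.ofReal (u y * V y ^ γ)) ^ (1/q)
          * ENNReal.ofReal (V w ^ s) ≤ ENNReal.ofReal B' := by
        rw [hB'def, ENNReal.ofReal_toReal hB.ne]
        exact hle
      have hc0 : ENNReal.ofReal (V w ^ s) ≠ 0 :=
        (ENNReal.ofReal_pos.mpr (by positivity)).ne'
      have h2 : (∫⁻ y in Ioi w, ENNReal.ofReal (u y * V y ^ γ)) ^ (1/q)
          ≤ ENNReal.ofReal (B' * V w ^ (-s)) := by
        have hdiv := (ENNReal.le_div_iff_mul_le (Or.inl hc0)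
          (Or.inl ENNReal.ofReal_ne_top)).mpr hle'
        calc (∫⁻ y in Ioi w, ENNReal.ofReal (u y * V y ^ γ)) ^ (1/q)
            ≤ ENNReal.ofReal B' / ENNReal.ofReal (V w ^ s) := hdiv
          _ = ENNReal.ofReal (B' / V w ^ s) :=
              (ENNReal.ofReal_div_of_pos (by positivity)).symm
          _ = ENNReal.ofReal (B' * V w ^ (-s)) := by
              rw [Real.rpow_neg hVw.le, div_eq_mul_inv]
      calc (∫⁻ y in Ioi w, ENNReal.ofReal (u y * V y ^ γ))
          = ((∫⁻ y in Ioi w, ENNReal.ofReal (u y * V y ^ γ)) ^ (1/q)) ^ q := by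
            rw [← ENNReal.rpow_mul, one_div_mul_cancel hq0.ne', ENNReal.rpow_one]
        _ ≤ (ENNReal.ofReal (B' * V w ^ (-s))) ^ q := ENNReal.rpow_le_rpow h2 hq0.le
        _ = ENNReal.ofReal ((B' * V w ^ (-s)) ^ q) :=
            ENNReal.ofReal_rpow_of_nonneg (by positivity) hq0.le
        _ = ENNReal.ofReal (B'^q * V w ^ (-(q * s))) := by
            rw [Real.mul_rpow hB'0 (Real.rpow_nonneg hVw.le _), ← Real.rpow_mul hVw.le,
              show -s * q = -(q * s) from by ring]
    have hU2ex : ∃ K : ℝ, 0 ≤ K ∧ ∀ x > (0:ℝ),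
        U x ≤ K * V x ^ (-(q * (1/p'))) := by
      rcases le_or_gt 0 γ with hγ0 | hγ0
      · refine ⟨B'^q, by positivity, fun x hx => ?_⟩
        have hVx := hV0 x hx
        have h3 : ENNReal.ofReal (V x ^ γ * U x)
            ≤ ENNReal.ofReal (B'^q * V x ^ (-(q * s))) := by
          calc ENNReal.ofReal (V x ^ γ * U x)
              = ∫⁻ y in Ioi x, ENNReal.ofReal (u y) * ENNReal.ofReal (V x ^ γ) := by
                rw [lintegral_mul_const _ (by fun_prop), hUc x hx,
                  ENNReal.ofReal_mul (Real.rpow_nonneg hVx.le _), mul_comm]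
            _ ≤ ∫⁻ y in Ioi x, ENNReal.ofReal (u y * V y ^ γ) := by
                refine setLIntegral_mono hLmeas fun y hy => ?_
                have hy0 : (0:ℝ) < y := hx.trans (mem_Ioi.mp hy)
                rw [← ENNReal.ofReal_mul (hupos y (mem_Ioi.mpr hy0)).le]
                exact ENNReal.ofReal_le_ofReal (mul_le_mul_of_nonneg_left
                  (Real.rpow_le_rpow hVx.le (hVmono (mem_Ioi.mp hy).le) hγ0)
                  (hupos y (mem_Ioi.mpr hy0)).le)
            _ ≤ ENNReal.ofReal (B'^q * V x ^ (-(q * s))) := hL x hx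
        have h4 : V x ^ γ * U x ≤ B'^q * V x ^ (-(q * s)) :=
          (ENNReal.ofReal_le_ofReal_iff (by positivity)).mp h3
        have h5 : U x ≤ B'^q * V x ^ (-(q * s)) / V x ^ γ := by
          rw [le_div_iff₀ (Real.rpow_pos_of_pos hVx _)]
          linarith [h4]
        calc U x ≤ B'^q * V x ^ (-(q * s)) / V x ^ γ := h5
          _ = B'^q * (V x ^ (-(q * s)) / V x ^ γ) := by ring
          _ = B'^q * V x ^ (-(q * (1/p'))) := by
              rw [← Real.rpow_sub hVx, show -(q * s) - γ = -(q * (1/p')) from by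
                rw [hγeq]; ring]
      · have hδ : (0:ℝ) < -γ := by linarith
        have hδρ : -γ < q * s := by rw [hγeq]; linarith
        have hK0 : (0:ℝ) ≤ (1 + (-γ) / (q * s - (-γ))) * B'^q :=
          mul_nonneg (add_nonneg zero_le_one (div_nonneg hδ.le (by linarith)))
            (by positivity)
        refine ⟨(1 + (-γ) / (q * s - (-γ))) * B'^q, hK0, fun x hx => ?_⟩
        have hVx := hV0 x hx
        have hmb := main_bound hVmono hVcont hV0 hLmeas
          (by positivity : (0:ℝ) ≤ B'^q) hδ hδρ hL hx
        have hlhs : ∫⁻ y in Ioi x, ENNReal.ofReal (u y * V y ^ γ)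
            * ENNReal.ofReal (V y ^ (-γ)) = ENNReal.ofReal (U x) := by
          rw [← hUc x hx]
          refine setLIntegral_congr_fun measurableSet_Ioi (fun y hy => ?_)
          have hy0 : (0:ℝ) < y := hx.trans (mem_Ioi.mp hy)
          have hVy := hV0 y hy0
          rw [← ENNReal.ofReal_mul (mul_nonneg (hupos y (mem_Ioi.mpr hy0)).le
            (Real.rpow_nonneg hVy.le _)), mul_assoc, ← Real.rpow_add hVy,
            add_neg_cancel, Real.rpow_zero, mul_one]
        rw [hlhs] at hmb
        have h4 : U x ≤ (1 + (-γ) / (q * s - (-γ))) * B'^q * V x ^ (-γ - q * s) := by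
          refine (ENNReal.ofReal_le_ofReal_iff ?_).mp hmb
          exact mul_nonneg hK0 (Real.rpow_nonneg hVx.le _)
        calc U x ≤ (1 + (-γ) / (q * s - (-γ))) * B'^q * V x ^ (-γ - q * s) := h4
          _ = (1 + (-γ) / (q * s - (-γ))) * B'^q * V x ^ (-(q * (1/p'))) := by
              rw [show -γ - q * s = -(q * (1/p')) from by rw [hγeq]; ring]
    obtain ⟨K, hK0, hKb⟩ := hU2ex
    refine lt_of_le_of_lt (iSup₂_le fun x hx => ?_)
      (ENNReal.ofReal_lt_top (r := K ^ (1/q)))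
    have hx0 := mem_Ioi.mp hx
    have hVx := hV0 x hx0
    have hUx := hU0 x hx0
    refine ENNReal.ofReal_le_ofReal ?_
    calc U x ^ (1/q) * V x ^ (1/p')
        ≤ (K * V x ^ (-(q * (1/p')))) ^ (1/q) * V x ^ (1/p') :=
          mul_le_mul_of_nonneg_right
            (Real.rpow_le_rpow hUx.le (hKb x hx0) (by positivity))
            (Real.rpow_nonneg hVx.le _)
      _ = K ^ (1/q) := aux_alg hK0 hVx hq0.ne'
end
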